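/- arXiv:0904.3743 — 2 statements merged into one kernel-verified Lean document; each statement's English description precedes it below -/
import Mathlib

section
/- For every simple graded A-module S, the graded dual S* is isomorphic to S as a graded A-module. -/
noncomputable section

/-- A realization of the generalized Weyl algebra `T(R,σ,v)`:
a `ℤ`-graded `ℂ`-algebra `A` containing `R` in degree `0`, with elements
`t₊` of degree `1` and `t₋` of degree `-1` satisfying the GWA relations, such that each
homogeneous component `A_n` is free of rank one as a left `R`-module with basis
`t₊^n` (for `n ≥ 0`) resp. `t₋^{-n}` (for `n ≤ 0`). -/
structure GWA (R : Type) [CommRing R] [Algebra ℂ R] (σ : R ≃ₐ[ℂ] R) (v : R) : Type 1 where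
  A : Type
  [ringA : Ring A]
  [algA : Algebra ℂ A]
  emb : R →ₐ[ℂ] A
  tp : A
  tm : A
  rel1 : ∀ r : R, emb r * tp = tp * emb (σ r)
  rel2 : ∀ r : R, emb (σ r) * tm = tm * emb r
  rel3 : tm * tp = emb (σ v)
  rel4 : tp * tm = emb v
  deg : ℤ → AddSubgroup A
  algmap_mem : ∀ c : ℂ, algebraMap ℂ A c ∈ deg 0
  emb_mem : ∀ r : R, emb r ∈ deg 0
  tp_mem : tp ∈ deg 1
  tm_mem : tm ∈ deg (-1)
  mul_mem : ∀ {i j : ℤ} {a b : A}, a ∈ deg i → b ∈ deg j → a * b ∈ deg (i + j)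
  decomp : ∀ a : A, ∃ (s : Finset ℤ) (g : ℤ → A), (∀ i, g i ∈ deg i) ∧ a = ∑ i ∈ s, g i
  indep : ∀ (s : Finset ℤ) (g : ℤ → A), (∀ i, g i ∈ deg i) → (∑ i ∈ s, g i) = 0 →
    ∀ i ∈ s, g i = 0
  free_pos : ∀ n : ℕ, ∀ a ∈ deg (n : ℤ), ∃! r : R, a = emb r * tp ^ n
  free_neg : ∀ n : ℕ, ∀ a ∈ deg (-(n : ℤ)), ∃! r : R, a = emb r * tm ^ n

attribute [instance] GWA.ringA GWA.algA

variable {R : Type} [CommRing R] [Algebra ℂ R] {σ : R ≃ₐ[ℂ] R} {v : R}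

/-- A `ℤ`-graded left module over (a realization of) a generalized Weyl algebra. -/
structure GradedMod (G : GWA R σ v) : Type 1 where
  M : Type
  [acg : AddCommGroup M]
  [mod : Module G.A M]
  deg : ℤ → AddSubgroup M
  smul_mem : ∀ {i j : ℤ} {a : G.A} {m : M}, a ∈ G.deg i → m ∈ deg j → a • m ∈ deg (i + j)
  decomp : ∀ m : M, ∃ (s : Finset ℤ) (g : ℤ → M), (∀ i, g i ∈ deg i) ∧ m = ∑ i ∈ s, g i
  indep : ∀ (s : Finset ℤ) (g : ℤ → M), (∀ i, g i ∈ deg i) → (∑ i ∈ s, g i) = 0 →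
    ∀ i ∈ s, g i = 0

attribute [instance] GradedMod.acg GradedMod.mod

variable {G : GWA R σ v}

/-- A homomorphism of graded modules that shifts degrees by `n`, i.e. an element of
`Hom_gr(X, Y[n])`. -/
structure GHom (X Y : GradedMod G) (n : ℤ) : Type where
  toLin : X.M →ₗ[G.A] Y.M
  map_deg : ∀ i : ℤ, ∀ m ∈ X.deg i, toLin m ∈ Y.deg (i + n)

/-- `X` is isomorphic to `Y[n]` as a graded module. -/
def GIso (X Y : GradedMod G) (n : ℤ) : Prop :=
  ∃ f : GHom X Y n, Function.Bijective f.toLin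

/-- A submodule is graded if every element of it is a sum of homogeneous elements of it. -/
def IsGradedSub (X : GradedMod G) (N : Submodule G.A X.M) : Prop :=
  ∀ m ∈ N, ∃ (s : Finset ℤ) (g : ℤ → X.M),
    (∀ i, g i ∈ X.deg i) ∧ (∀ i, g i ∈ N) ∧ m = ∑ i ∈ s, g i

/-- `χ_λ = {k ∈ ℤ : σ^k(v) ∈ λ}`. -/
def chiSet (σ : R ≃ₐ[ℂ] R) (v : R) (lam : Ideal R) : Set ℤ := {k : ℤ | (σ ^ k) v ∈ lam}

/-- `X` is (a realization of) the graded module `A^λ = A/Aλ`: it is cyclic, generated by a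
degree-zero element whose annihilator is the left ideal generated by `λ`. -/
def IsStdMod (G : GWA R σ v) (lam : Ideal R) (X : GradedMod G) : Prop :=
  ∃ x ∈ X.deg 0, Submodule.span G.A {x} = ⊤ ∧
    ∀ a : G.A, a • x = 0 ↔ a ∈ Submodule.span G.A (G.emb '' (lam : Set R))

/-- A graded module is simple if it is nonzero and has no proper nontrivial graded submodules. -/
def IsSimpleGr (X : GradedMod G) : Prop :=
  (∃ m : X.M, m ≠ 0) ∧ ∀ N : Submodule G.A X.M, IsGradedSub X N → N = ⊥ ∨ N = ⊤

/-- Artinian graded module : the descending chain condition on graded submodules. -/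
def IsArtinianGr (X : GradedMod G) : Prop :=
  ∀ f : ℕ → Submodule G.A X.M, (∀ n, IsGradedSub X (f n)) →
    (∀ n, f (n + 1) ≤ f n) → ∃ n, ∀ m, n ≤ m → f m = f n

/-- `Y` is a graded subquotient of `X`. -/
def IsSubquotient (X Y : GradedMod G) : Prop :=
  ∃ (Q P : Submodule G.A X.M), IsGradedSub X Q ∧ IsGradedSub X P ∧ P ≤ Q ∧
    ∃ φ : Q →ₗ[G.A] Y.M, Function.Surjective φ ∧
      (∀ q : Q, φ q = 0 ↔ (q : X.M) ∈ P) ∧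
      (∀ (i : ℤ) (q : Q), (q : X.M) ∈ X.deg i → φ q ∈ Y.deg i)
section Rep

variable (S : GradedMod G)

/-- canonical support finset from `decomp` -/
def GradedMod.supp (m : S.M) : Finset ℤ := (S.decomp m).choose

/-- canonical homogeneous component -/
def GradedMod.rep (m : S.M) (n : ℤ) : S.M :=
  if n ∈ S.supp m then (S.decomp m).choose_spec.choose n else 0

lemma GradedMod.rep_mem (m : S.M) (n : ℤ) : S.rep m n ∈ S.deg n := by
  unfold GradedMod.rep
  split
  · exact (S.decomp m).choose_spec.choose_spec.1 n
  · exact zero_mem _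

lemma GradedMod.rep_vanish {m : S.M} {n : ℤ} (h : n ∉ S.supp m) : S.rep m n = 0 := by
  unfold GradedMod.rep
  exact if_neg h

lemma GradedMod.rep_sum (m : S.M) : m = ∑ i ∈ S.supp m, S.rep m i := by
  have h := (S.decomp m).choose_spec.choose_spec.2
  conv_lhs => rw [h]
  refine Finset.sum_congr rfl (fun i hi => ?_)
  unfold GradedMod.rep
  rw [if_pos hi]

lemma GradedMod.rep_spec {m : S.M} (s : Finset ℤ) (g : ℤ → S.M)
    (hg : ∀ i, g i ∈ S.deg i) (hm : m = ∑ i ∈ s, g i) (n : ℤ) :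
    S.rep m n = if n ∈ s then g n else 0 := by
  have mem : ∀ i : ℤ, (if i ∈ s then g i else 0) - S.rep m i ∈ S.deg i := by
    intro i
    refine sub_mem ?_ (S.rep_mem m i)
    split
    · exact hg i
    · exact zero_mem _
  have sum0 : ∑ i ∈ s ∪ S.supp m, ((if i ∈ s then g i else 0) - S.rep m i) = 0 := by
    rw [Finset.sum_sub_distrib]
    have h1 : ∑ i ∈ s ∪ S.supp m, (if i ∈ s then g i else 0) = ∑ i ∈ s, g i := by
      rw [← Finset.sum_subset Finset.subset_union_left (fun x _ hx => if_neg hx)]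
      exact Finset.sum_congr rfl (fun i hi => if_pos hi)
    have h2 : ∑ i ∈ s ∪ S.supp m, S.rep m i = m := by
      rw [← Finset.sum_subset Finset.subset_union_right
        (fun x _ hx => S.rep_vanish hx)]
      exact (S.rep_sum m).symm
    rw [h1, h2, ← hm, sub_self]
  have key := S.indep (s ∪ S.supp m) _ mem sum0
  by_cases hn : n ∈ s ∪ S.supp m
  · exact (sub_eq_zero.mp (key n hn)).symm
  · rw [Finset.mem_union] at hn
    push_neg at hn
    rw [if_neg hn.1, S.rep_vanish hn.2]

end Rep
section Rep2

variable (S : GradedMod G)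

lemma GradedMod.rep_of_mem {m : S.M} {j : ℤ} (h : m ∈ S.deg j) (n : ℤ) :
    S.rep m n = if n = j then m else 0 := by
  have hmem : ∀ i : ℤ, (if i = j then m else 0) ∈ S.deg i := by
    intro i
    by_cases hi : i = j
    · rw [if_pos hi, hi]; exact h
    · rw [if_neg hi]; exact zero_mem _
  have := S.rep_spec (m := m) ({j} : Finset ℤ) (fun i => if i = j then m else 0) hmem (by simp) n
  simp only [Finset.mem_singleton] at this
  rw [this]
  by_cases hn : n = j <;> simp [hn]

lemma GradedMod.rep_self {m : S.M} {n : ℤ} (h : m ∈ S.deg n) : S.rep m n = m := by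
  rw [S.rep_of_mem h, if_pos rfl]

lemma GradedMod.rep_ne {m : S.M} {j : ℤ} (h : m ∈ S.deg j) {n : ℤ} (hn : n ≠ j) :
    S.rep m n = 0 := by
  rw [S.rep_of_mem h, if_neg hn]

lemma GradedMod.rep_zero (n : ℤ) : S.rep 0 n = 0 := by
  rw [S.rep_of_mem (zero_mem (S.deg 0))]
  split <;> rfl

lemma GradedMod.rep_add (m m' : S.M) (n : ℤ) :
    S.rep (m + m') n = S.rep m n + S.rep m' n := by
  have hsum : m + m' = ∑ i ∈ S.supp m ∪ S.supp m', (S.rep m i + S.rep m' i) := by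
    rw [Finset.sum_add_distrib,
      ← Finset.sum_subset Finset.subset_union_left (fun x _ hx => S.rep_vanish hx),
      ← Finset.sum_subset Finset.subset_union_right (fun x _ hx => S.rep_vanish hx),
      ← S.rep_sum, ← S.rep_sum]
  have := S.rep_spec _ _ (fun i => add_mem (S.rep_mem m i) (S.rep_mem m' i)) hsum n
  rw [this]
  split
  · rfl
  · rename_i hn
    rw [Finset.mem_union] at hn
    push_neg at hn
    rw [S.rep_vanish hn.1, S.rep_vanish hn.2, add_zero]

lemma GradedMod.rep_smul {a : G.A} {k : ℤ} (ha : a ∈ G.deg k) (m : S.M) (n : ℤ) :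
    S.rep (a • m) n = a • S.rep m (n - k) := by
  have mem : ∀ i : ℤ, a • S.rep m (i - k) ∈ S.deg i := by
    intro i
    have := S.smul_mem ha (S.rep_mem m (i - k))
    have e : k + (i - k) = i := by ring
    rwa [e] at this
  have hsum : a • m = ∑ i ∈ (S.supp m).image (· + k), a • S.rep m (i - k) := by
    rw [Finset.sum_image (fun x _ y _ h => by omega)]
    simp only [add_sub_cancel_right]
    rw [← Finset.smul_sum, ← S.rep_sum]
  have := S.rep_spec _ _ mem hsum n
  rw [this]
  split
  · rfl
  · rename_i hn
    have : n - k ∉ S.supp m := by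
      intro hc
      exact hn (Finset.mem_image.mpr ⟨n - k, hc, by ring⟩)
    rw [S.rep_vanish this, smul_zero]

end Rep2
section Simple

variable (S : GradedMod G)

lemma GWA.one_mem (G : GWA R σ v) : (1 : G.A) ∈ G.deg 0 := by
  have := G.emb_mem 1
  rwa [map_one] at this

lemma GWA.tp_pow_mem (G : GWA R σ v) (k : ℕ) : G.tp ^ k ∈ G.deg k := by
  induction k with
  | zero => simpa using G.one_mem
  | succ n ih =>
    rw [pow_succ]
    have := G.mul_mem ih G.tp_mem
    have e : ((n : ℤ) + 1) = ((n + 1 : ℕ) : ℤ) := by push_cast; ring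
    rwa [e] at this

lemma GWA.tm_pow_mem (G : GWA R σ v) (k : ℕ) : G.tm ^ k ∈ G.deg (-(k : ℤ)) := by
  induction k with
  | zero => simpa using G.one_mem
  | succ n ih =>
    rw [pow_succ]
    have := G.mul_mem ih G.tm_mem
    have e : (-(n : ℤ) + -1) = (-((n + 1 : ℕ) : ℤ)) := by push_cast; ring
    rwa [e] at this

lemma GWA.deg_zero_emb (G : GWA R σ v) {a : G.A} (ha : a ∈ G.deg 0) :
    ∃ r : R, a = G.emb r := by
  have h0 : a ∈ G.deg ((0 : ℕ) : ℤ) := by exact_mod_cast ha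
  obtain ⟨r, hr, -⟩ := G.free_pos 0 a h0
  exact ⟨r, by simpa using hr⟩

/-- the submodule generated by a homogeneous element is graded -/
lemma span_graded {m : S.M} {k : ℤ} (hm : m ∈ S.deg k) :
    IsGradedSub S (Submodule.span G.A {m}) := by
  intro x hx
  rw [Submodule.mem_span_singleton] at hx
  obtain ⟨a, rfl⟩ := hx
  obtain ⟨s, g, hg, rfl⟩ := G.decomp a
  refine ⟨s.image (· + k), fun j => g (j - k) • m, ?_, ?_, ?_⟩
  · intro j
    have := S.smul_mem (hg (j - k)) hm
    have e : j - k + k = j := by ring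
    rwa [e] at this
  · intro j
    rw [Submodule.mem_span_singleton]
    exact ⟨g (j - k), rfl⟩
  · rw [Finset.sum_image (fun x _ y _ h => by omega)]
    simp only [add_sub_cancel_right]
    rw [← Finset.sum_smul]

lemma span_top (hS : IsSimpleGr S) {m : S.M} {k : ℤ} (hm : m ∈ S.deg k)
    (hm0 : m ≠ 0) : Submodule.span G.A {m} = ⊤ := by
  rcases hS.2 _ (span_graded S hm) with h | h
  · exfalso
    apply hm0
    have : m ∈ Submodule.span G.A {m} := Submodule.mem_span_singleton_self m
    rw [h] at this
    simpa using this
  · exact h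

lemma cyclic (hS : IsSimpleGr S) {m : S.M} {k : ℤ} (hm : m ∈ S.deg k)
    (hm0 : m ≠ 0) {x : S.M} (hx : x ∈ S.deg k) : ∃ r : R, x = G.emb r • m := by
  have : x ∈ Submodule.span G.A {m} := by
    rw [span_top S hS hm hm0]; trivial
  rw [Submodule.mem_span_singleton] at this
  obtain ⟨a, rfl⟩ := this
  obtain ⟨s, g, hg, rfl⟩ := G.decomp a
  rw [Finset.sum_smul] at hx ⊢
  have mem : ∀ j : ℤ, g (j - k) • m ∈ S.deg j := by
    intro j
    have := S.smul_mem (hg (j - k)) hm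
    have e : j - k + k = j := by ring
    rwa [e] at this
  have hsum : ∑ i ∈ s, g i • m = ∑ j ∈ s.image (· + k), g (j - k) • m := by
    rw [Finset.sum_image (fun x _ y _ h => by omega)]
    simp only [add_sub_cancel_right]
  have hrep := S.rep_spec (s.image (· + k)) _ mem hsum k
  have hself : S.rep (∑ i ∈ s, g i • m) k = ∑ i ∈ s, g i • m := S.rep_self hx
  rw [hself] at hrep
  by_cases hk : k ∈ s.image (· + k)
  · rw [if_pos hk, sub_self] at hrep
    obtain ⟨r, hr⟩ := G.deg_zero_emb (hg 0)
    exact ⟨r, by rw [hrep, hr]⟩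
  · rw [if_neg hk] at hrep
    refine ⟨0, ?_⟩
    rw [hrep, map_zero, zero_smul]

end Simple
section Null

variable (S : GradedMod G)

/-- the annihilator of `m` inside `R` -/
def annId (m : S.M) : Ideal R where
  carrier := {r | G.emb r • m = 0}
  zero_mem' := by simp only [Set.mem_setOf_eq, map_zero, zero_smul]
  add_mem' := by
    intro a b ha hb
    simp only [Set.mem_setOf_eq, map_add, add_smul] at *
    rw [ha, hb, add_zero]
  smul_mem' := by
    intro c x hx
    simp only [Set.mem_setOf_eq, smul_eq_mul, map_mul, mul_smul] at *
    rw [hx, smul_zero]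

lemma mem_annId {m : S.M} {r : R} : r ∈ annId S m ↔ G.emb r • m = 0 := Iff.rfl

lemma annId_maximal (hS : IsSimpleGr S) {m : S.M} {k : ℤ} (hm : m ∈ S.deg k)
    (hm0 : m ≠ 0) : (annId S m).IsMaximal := by
  rw [Ideal.isMaximal_iff]
  constructor
  · rw [mem_annId, map_one, one_smul]
    exact hm0
  · intro J x hIJ hxI hxJ
    rw [mem_annId] at hxI
    have hxm : G.emb x • m ∈ S.deg k := by
      have := S.smul_mem (G.emb_mem x) hm
      rwa [zero_add] at this
    obtain ⟨r', hr'⟩ := cyclic S hS hxm hxI hm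
    have hmem : (1 : R) - r' * x ∈ annId S m := by
      rw [mem_annId, map_sub, sub_smul, map_one, one_smul, map_mul, mul_smul, ← hr',
        sub_self]
    have h2 : r' * x ∈ J := J.mul_mem_left r' hxJ
    have := J.add_mem (hIJ hmem) h2
    simpa using this

lemma onedim [Module ℂ S.M] (hfg : Algebra.FiniteType ℂ R)
    (hsc : ∀ (c : ℂ) (m : S.M), c • m = algebraMap ℂ G.A c • m)
    (hS : IsSimpleGr S) {m : S.M} {k : ℤ} (hm : m ∈ S.deg k) (hm0 : m ≠ 0)
    {x : S.M} (hx : x ∈ S.deg k) : ∃ c : ℂ, x = c • m := by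
  obtain ⟨r, rfl⟩ := cyclic S hS hm hm0 hx
  haveI hmax : (annId S m).IsMaximal := annId_maximal S hS hm hm0
  set I := annId S m with hI
  -- surjectivity of ℂ → R ⧸ I via Zariski's lemma
  obtain ⟨n, ψ, hψ⟩ := Algebra.FiniteType.iff_quotient_mvPolynomial''.mp hfg
  set P : Ideal (MvPolynomial (Fin n) ℂ) := I.comap ψ.toRingHom with hP
  haveI : P.IsMaximal := Ideal.comap_isMaximal_of_surjective ψ.toRingHom hψ
  have hint : (RingHom.comp (Ideal.Quotient.mk P) MvPolynomial.C).IsIntegral :=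
    MvPolynomial.quotient_mk_comp_C_isIntegral_of_isJacobsonRing P
  set g : (MvPolynomial (Fin n) ℂ ⧸ P) →+* R ⧸ I :=
    Ideal.quotientMap I ψ.toRingHom le_rfl with hg
  have hgs : Function.Surjective g := Ideal.quotientMap_surjective hψ
  have hcomp : (g.comp (RingHom.comp (Ideal.Quotient.mk P) MvPolynomial.C)).IsIntegral :=
    RingHom.IsIntegral.trans _ _ hint (g.isIntegral_of_surjective hgs)
  have hsurj : Function.Surjective (g.comp ((Ideal.Quotient.mk P).comp MvPolynomial.C)) :=
    (IsAlgClosed.ringHom_bijective_of_isIntegral _ hcomp).2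
  obtain ⟨c, hc⟩ := hsurj (Ideal.Quotient.mk I r)
  have hc' : Ideal.Quotient.mk I (algebraMap ℂ R c) = Ideal.Quotient.mk I r := by
    have : g ((Ideal.Quotient.mk P) (MvPolynomial.C c)) =
        Ideal.Quotient.mk I (ψ (MvPolynomial.C c)) := Ideal.quotientMap_mk
    rw [RingHom.comp_apply, RingHom.comp_apply] at hc
    rw [this] at hc
    rwa [show ψ (MvPolynomial.C c) = algebraMap ℂ R c from ψ.commutes c] at hc
  have hmem : r - algebraMap ℂ R c ∈ I := by
    rw [← Ideal.Quotient.eq_zero_iff_mem, map_sub, hc', sub_self]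
  have h0 : G.emb (r - algebraMap ℂ R c) • m = 0 := hmem
  rw [map_sub, sub_smul] at h0
  refine ⟨c, ?_⟩
  rw [sub_eq_zero.mp h0, AlgHom.commutes, ← hsc]

end Null
section Eps
open Classical

variable (S : GradedMod G) [Module ℂ S.M]

/-- the support of the graded module -/
def Tset : Set ℤ := {n : ℤ | ∃ m ∈ S.deg n, m ≠ 0}

/-- a choice of nonzero vector in each nonzero component -/
def ee (n : ℤ) : S.M := if h : n ∈ Tset S then h.choose else 0

lemma ee_mem (n : ℤ) : ee S n ∈ S.deg n := by
  unfold ee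
  split
  · rename_i h
    exact h.choose_spec.1
  · exact zero_mem _

lemma ee_ne {n : ℤ} (h : n ∈ Tset S) : ee S n ≠ 0 := by
  unfold ee
  rw [dif_pos h]
  exact h.choose_spec.2

lemma ee_zero {n : ℤ} (h : n ∉ Tset S) : ee S n = 0 := by
  unfold ee
  rw [dif_neg h]

lemma deg_eq_zero {n : ℤ} (h : n ∉ Tset S) {x : S.M} (hx : x ∈ S.deg n) : x = 0 := by
  by_contra hx0
  exact h ⟨x, hx, hx0⟩

lemma smul_cancel {c c' : ℂ} {m : S.M} (hm : m ≠ 0) (h : c • m = c' • m) : c = c' := by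
  by_contra hne
  apply hm
  have h1 : (c - c') • m = 0 := by rw [sub_smul, h, sub_self]
  have h2 : (c - c') ≠ 0 := sub_ne_zero.mpr hne
  calc m = ((c - c')⁻¹ * (c - c')) • m := by rw [inv_mul_cancel₀ h2, one_smul]
    _ = (c - c')⁻¹ • ((c - c') • m) := by rw [mul_smul]
    _ = 0 := by rw [h1, smul_zero]

/-- the coordinate of the degree-`n` component of `m` w.r.t. `ee n` -/
def eps (m : S.M) (n : ℤ) : ℂ :=
  if n ∈ Tset S then
    (if h : ∃ c : ℂ, S.rep m n = c • ee S n then h.choose else 0)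
  else 0

lemma eps_not_mem {m : S.M} {n : ℤ} (h : n ∉ Tset S) : eps S m n = 0 := by
  unfold eps
  rw [if_neg h]

lemma eps_spec (hfg : Algebra.FiniteType ℂ R)
    (hsc : ∀ (c : ℂ) (m : S.M), c • m = algebraMap ℂ G.A c • m)
    (hS : IsSimpleGr S) (m : S.M) (n : ℤ) : S.rep m n = eps S m n • ee S n := by
  by_cases hn : n ∈ Tset S
  · have hex : ∃ c : ℂ, S.rep m n = c • ee S n :=
      onedim S hfg hsc hS (ee_mem S n) (ee_ne S hn) (S.rep_mem m n)
    unfold eps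
    rw [if_pos hn, dif_pos hex]
    exact hex.choose_spec
  · rw [eps_not_mem S hn, zero_smul]
    exact deg_eq_zero S hn (S.rep_mem m n)

lemma eps_eq_of_rep (hfg : Algebra.FiniteType ℂ R)
    (hsc : ∀ (c : ℂ) (m : S.M), c • m = algebraMap ℂ G.A c • m)
    (hS : IsSimpleGr S) {m : S.M} {n : ℤ} {c : ℂ} (h : S.rep m n = c • ee S n)
    (hn : n ∈ Tset S) : eps S m n = c :=
  smul_cancel S (ee_ne S hn) ((eps_spec S hfg hsc hS m n).symm.trans h)

lemma eps_of_rep_zero (hfg : Algebra.FiniteType ℂ R)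
    (hsc : ∀ (c : ℂ) (m : S.M), c • m = algebraMap ℂ G.A c • m)
    (hS : IsSimpleGr S) {m : S.M} {n : ℤ} (h : S.rep m n = 0) : eps S m n = 0 := by
  by_cases hn : n ∈ Tset S
  · exact eps_eq_of_rep S hfg hsc hS (by rw [h, zero_smul]) hn
  · exact eps_not_mem S hn

lemma eps_zero (hfg : Algebra.FiniteType ℂ R)
    (hsc : ∀ (c : ℂ) (m : S.M), c • m = algebraMap ℂ G.A c • m)
    (hS : IsSimpleGr S) (n : ℤ) : eps S 0 n = 0 :=
  eps_of_rep_zero S hfg hsc hS (S.rep_zero n)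

lemma eps_ne (hfg : Algebra.FiniteType ℂ R)
    (hsc : ∀ (c : ℂ) (m : S.M), c • m = algebraMap ℂ G.A c • m)
    (hS : IsSimpleGr S) {m : S.M} {j : ℤ} (h : m ∈ S.deg j) {n : ℤ} (hn : n ≠ j) :
    eps S m n = 0 :=
  eps_of_rep_zero S hfg hsc hS (S.rep_ne h hn)

lemma eps_self (hfg : Algebra.FiniteType ℂ R)
    (hsc : ∀ (c : ℂ) (m : S.M), c • m = algebraMap ℂ G.A c • m)
    (hS : IsSimpleGr S) {n : ℤ} (hn : n ∈ Tset S) : eps S (ee S n) n = 1 :=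
  eps_eq_of_rep S hfg hsc hS (by rw [S.rep_self (ee_mem S n), one_smul]) hn

lemma eps_homog (hfg : Algebra.FiniteType ℂ R)
    (hsc : ∀ (c : ℂ) (m : S.M), c • m = algebraMap ℂ G.A c • m)
    (hS : IsSimpleGr S) {m : S.M} {n : ℤ} (h : m ∈ S.deg n) (hn : n ∈ Tset S) :
    m = eps S m n • ee S n := by
  rw [← eps_spec S hfg hsc hS, S.rep_self h]

lemma eps_add (hfg : Algebra.FiniteType ℂ R)
    (hsc : ∀ (c : ℂ) (m : S.M), c • m = algebraMap ℂ G.A c • m)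
    (hS : IsSimpleGr S) (m m' : S.M) (n : ℤ) :
    eps S (m + m') n = eps S m n + eps S m' n := by
  by_cases hn : n ∈ Tset S
  · refine eps_eq_of_rep S hfg hsc hS ?_ hn
    rw [S.rep_add, eps_spec S hfg hsc hS m n, eps_spec S hfg hsc hS m' n, add_smul]
  · rw [eps_not_mem S hn, eps_not_mem S hn, eps_not_mem S hn, add_zero]

lemma rep_csmul (hsc : ∀ (c : ℂ) (m : S.M), c • m = algebraMap ℂ G.A c • m) (c : ℂ) (m : S.M) (n : ℤ) : S.rep (c • m) n = c • S.rep m n := by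
  rw [hsc, S.rep_smul (G.algmap_mem c), sub_zero, ← hsc]

lemma eps_csmul (hfg : Algebra.FiniteType ℂ R)
    (hsc : ∀ (c : ℂ) (m : S.M), c • m = algebraMap ℂ G.A c • m)
    (hS : IsSimpleGr S) (c : ℂ) (m : S.M) (n : ℤ) : eps S (c • m) n = c * eps S m n := by
  by_cases hn : n ∈ Tset S
  · refine eps_eq_of_rep S hfg hsc hS ?_ hn
    rw [rep_csmul S hsc, eps_spec S hfg hsc hS m n, smul_smul]
  · rw [eps_not_mem S hn, eps_not_mem S hn, mul_zero]

lemma eps_support (hfg : Algebra.FiniteType ℂ R)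
    (hsc : ∀ (c : ℂ) (m : S.M), c • m = algebraMap ℂ G.A c • m)
    (hS : IsSimpleGr S) (m : S.M) : {n : ℤ | eps S m n ≠ 0}.Finite := by
  refine Set.Finite.subset (S.supp m).finite_toSet (fun n hn => ?_)
  by_contra hns
  exact hn (eps_of_rep_zero S hfg hsc hS (S.rep_vanish hns))

lemma eps_sum (hfg : Algebra.FiniteType ℂ R)
    (hsc : ∀ (c : ℂ) (m : S.M), c • m = algebraMap ℂ G.A c • m)
    (hS : IsSimpleGr S) (m : S.M) : m = ∑ i ∈ S.supp m, eps S m i • ee S i := by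
  conv_lhs => rw [S.rep_sum m]
  exact Finset.sum_congr rfl (fun i _ => eps_spec S hfg hsc hS m i)

end Eps
section Struct

open Classical

set_option linter.unusedSectionVars false

variable (S : GradedMod G) [Module ℂ S.M]

lemma csmul_comm (hsc : ∀ (c : ℂ) (m : S.M), c • m = algebraMap ℂ G.A c • m)
    (a : G.A) (c : ℂ) (m : S.M) : a • (c • m) = c • (a • m) := by
  rw [hsc, hsc, ← mul_smul, ← mul_smul, Algebra.commutes]

/-- structure constant for the action of `tp` -/
def cc (n : ℤ) : ℂ := eps S (G.tp • ee S n) (n + 1)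

/-- structure constant for the action of `tm` -/
def dd (n : ℤ) : ℂ := eps S (G.tm • ee S n) (n - 1)

/-- the character by which `R` acts on the degree `n` component -/
def chr (n : ℤ) (r : R) : ℂ := eps S (G.emb r • ee S n) n

lemma tp_ee_mem (n : ℤ) : G.tp • ee S n ∈ S.deg (n + 1) := by
  have := S.smul_mem G.tp_mem (ee_mem S n)
  rwa [add_comm] at this

lemma tm_ee_mem (n : ℤ) : G.tm • ee S n ∈ S.deg (n - 1) := by
  have := S.smul_mem G.tm_mem (ee_mem S n)
  rwa [show (-1 : ℤ) + n = n - 1 by ring] at this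

lemma emb_ee_mem (r : R) {m : S.M} {n : ℤ} (hm : m ∈ S.deg n) :
    G.emb r • m ∈ S.deg n := by
  have := S.smul_mem (G.emb_mem r) hm
  rwa [zero_add] at this

lemma tp_ee (hfg : Algebra.FiniteType ℂ R)
    (hsc : ∀ (c : ℂ) (m : S.M), c • m = algebraMap ℂ G.A c • m)
    (hS : IsSimpleGr S) (n : ℤ) : G.tp • ee S n = cc S n • ee S (n + 1) := by
  by_cases hn : (n + 1) ∈ Tset S
  · exact eps_homog S hfg hsc hS (tp_ee_mem S n) hn
  · rw [deg_eq_zero S hn (tp_ee_mem S n), ee_zero S hn, smul_zero]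

lemma tm_ee (hfg : Algebra.FiniteType ℂ R)
    (hsc : ∀ (c : ℂ) (m : S.M), c • m = algebraMap ℂ G.A c • m)
    (hS : IsSimpleGr S) (n : ℤ) : G.tm • ee S n = dd S n • ee S (n - 1) := by
  by_cases hn : (n - 1) ∈ Tset S
  · exact eps_homog S hfg hsc hS (tm_ee_mem S n) hn
  · rw [deg_eq_zero S hn (tm_ee_mem S n), ee_zero S hn, smul_zero]

lemma emb_ee (hfg : Algebra.FiniteType ℂ R)
    (hsc : ∀ (c : ℂ) (m : S.M), c • m = algebraMap ℂ G.A c • m)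
    (hS : IsSimpleGr S) (r : R) (n : ℤ) : G.emb r • ee S n = chr S n r • ee S n := by
  by_cases hn : n ∈ Tset S
  · exact eps_homog S hfg hsc hS (emb_ee_mem S r (ee_mem S n)) hn
  · rw [deg_eq_zero S hn (emb_ee_mem S r (ee_mem S n)), ee_zero S hn, smul_zero]

lemma eps_tp (hfg : Algebra.FiniteType ℂ R)
    (hsc : ∀ (c : ℂ) (m : S.M), c • m = algebraMap ℂ G.A c • m)
    (hS : IsSimpleGr S) (m : S.M) (n : ℤ) :
    eps S (G.tp • m) n = cc S (n - 1) * eps S m (n - 1) := by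
  have hrep : S.rep (G.tp • m) n = (cc S (n - 1) * eps S m (n - 1)) • ee S n := by
    rw [S.rep_smul G.tp_mem, eps_spec S hfg hsc hS m (n - 1),
      csmul_comm S hsc, tp_ee S hfg hsc hS, show n - 1 + 1 = n by ring,
      smul_smul, mul_comm]
  by_cases hn : n ∈ Tset S
  · exact eps_eq_of_rep S hfg hsc hS hrep hn
  · rw [eps_not_mem S hn]
    have : cc S (n - 1) = 0 := by
      unfold cc
      rw [show n - 1 + 1 = n by ring]
      exact eps_not_mem S hn
    rw [this, zero_mul]

lemma eps_tm (hfg : Algebra.FiniteType ℂ R)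
    (hsc : ∀ (c : ℂ) (m : S.M), c • m = algebraMap ℂ G.A c • m)
    (hS : IsSimpleGr S) (m : S.M) (n : ℤ) :
    eps S (G.tm • m) n = dd S (n + 1) * eps S m (n + 1) := by
  have hrep : S.rep (G.tm • m) n = (dd S (n + 1) * eps S m (n + 1)) • ee S n := by
    rw [S.rep_smul G.tm_mem, show n - (-1) = n + 1 by ring,
      eps_spec S hfg hsc hS m (n + 1), csmul_comm S hsc, tm_ee S hfg hsc hS,
      show n + 1 - 1 = n by ring, smul_smul, mul_comm]
  by_cases hn : n ∈ Tset S
  · exact eps_eq_of_rep S hfg hsc hS hrep hn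
  · rw [eps_not_mem S hn]
    have : dd S (n + 1) = 0 := by
      unfold dd
      rw [show n + 1 - 1 = n by ring]
      exact eps_not_mem S hn
    rw [this, zero_mul]

lemma eps_emb (hfg : Algebra.FiniteType ℂ R)
    (hsc : ∀ (c : ℂ) (m : S.M), c • m = algebraMap ℂ G.A c • m)
    (hS : IsSimpleGr S) (r : R) (m : S.M) (n : ℤ) :
    eps S (G.emb r • m) n = chr S n r * eps S m n := by
  have hrep : S.rep (G.emb r • m) n = (chr S n r * eps S m n) • ee S n := by
    rw [S.rep_smul (G.emb_mem r), sub_zero, eps_spec S hfg hsc hS m n,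
      csmul_comm S hsc, emb_ee S hfg hsc hS, smul_smul, mul_comm]
  by_cases hn : n ∈ Tset S
  · exact eps_eq_of_rep S hfg hsc hS hrep hn
  · rw [eps_not_mem S hn, eps_not_mem S hn, mul_zero]

end Struct
section Claims

open Classical
set_option linter.unusedSectionVars false

variable (S : GradedMod G) [Module ℂ S.M]

lemma rep_via_span (hS : IsSimpleGr S) {y : S.M} {n : ℤ} (hy : y ∈ S.deg n)
    (hy0 : y ≠ 0) (x : S.M) (k : ℤ) : ∃ a ∈ G.deg (k - n), S.rep x k = a • y := by
  have hx : x ∈ Submodule.span G.A {y} := by rw [span_top S hS hy hy0]; trivial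
  rw [Submodule.mem_span_singleton] at hx
  obtain ⟨b, rfl⟩ := hx
  obtain ⟨s, g, hg, rfl⟩ := G.decomp b
  have mem : ∀ j : ℤ, g (j - n) • y ∈ S.deg j := by
    intro j
    have := S.smul_mem (hg (j - n)) hy
    rwa [show j - n + n = j by ring] at this
  have hsum : (∑ i ∈ s, g i) • y = ∑ j ∈ s.image (· + n), g (j - n) • y := by
    rw [Finset.sum_image (fun x _ y _ h => by omega)]
    simp only [add_sub_cancel_right]
    rw [Finset.sum_smul]
  have hrep := S.rep_spec _ _ mem hsum k
  by_cases hk : k ∈ s.image (· + n)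
  · rw [hrep, if_pos hk]
    exact ⟨g (k - n), hg _, rfl⟩
  · rw [hrep, if_neg hk]
    exact ⟨0, zero_mem _, (zero_smul _ _).symm⟩

lemma Tset_nonempty (hS : IsSimpleGr S) : ∃ n, n ∈ Tset S := by
  obtain ⟨m, hm⟩ := hS.1
  by_contra h
  push_neg at h
  apply hm
  have hz : ∀ i ∈ S.supp m, S.rep m i = 0 := fun i _ =>
    deg_eq_zero S (h i) (S.rep_mem m i)
  calc m = ∑ i ∈ S.supp m, S.rep m i := S.rep_sum m
    _ = 0 := Finset.sum_eq_zero hz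

lemma cc_ne (hfg : Algebra.FiniteType ℂ R)
    (hsc : ∀ (c : ℂ) (m : S.M), c • m = algebraMap ℂ G.A c • m)
    (hS : IsSimpleGr S) {n : ℤ} (hn : n ∈ Tset S) (hn1 : (n + 1) ∈ Tset S) :
    cc S n ≠ 0 := by
  intro h
  have h0 : G.tp • ee S n = 0 := by
    rw [tp_ee S hfg hsc hS, h, zero_smul]
  obtain ⟨a, ha, hrep⟩ := rep_via_span S hS (ee_mem S n) (ee_ne S hn) (ee S (n + 1)) (n + 1)
  rw [S.rep_self (ee_mem S (n + 1))] at hrep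
  rw [show n + 1 - n = ((1 : ℕ) : ℤ) by norm_num] at ha
  obtain ⟨r, hra, -⟩ := G.free_pos 1 a ha
  rw [pow_one] at hra
  apply ee_ne S hn1
  rw [hrep, hra, mul_smul, h0, smul_zero]

lemma dd_ne (hfg : Algebra.FiniteType ℂ R)
    (hsc : ∀ (c : ℂ) (m : S.M), c • m = algebraMap ℂ G.A c • m)
    (hS : IsSimpleGr S) {n : ℤ} (hn : n ∈ Tset S) (hn1 : (n + 1) ∈ Tset S) :
    dd S (n + 1) ≠ 0 := by
  intro h
  have h0 : G.tm • ee S (n + 1) = 0 := by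
    rw [tm_ee S hfg hsc hS, h, zero_smul]
  obtain ⟨a, ha, hrep⟩ := rep_via_span S hS (ee_mem S (n + 1)) (ee_ne S hn1) (ee S n) n
  rw [S.rep_self (ee_mem S n)] at hrep
  rw [show n - (n + 1) = -((1 : ℕ) : ℤ) by norm_num] at ha
  obtain ⟨r, hra, -⟩ := G.free_neg 1 a ha
  rw [pow_one] at hra
  apply ee_ne S hn
  rw [hrep, hra, mul_smul, h0, smul_zero]

lemma eps_of_rep_zero' {m : S.M} {n : ℤ} (h : S.rep m n = 0) : eps S m n = 0 := by
  unfold eps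
  by_cases hn : n ∈ Tset S
  · rw [if_pos hn]
    have hex : ∃ c : ℂ, S.rep m n = c • ee S n := ⟨0, by rw [h, zero_smul]⟩
    rw [dif_pos hex]
    have h2 : hex.choose • ee S n = (0 : ℂ) • ee S n := by
      rw [← hex.choose_spec, h, zero_smul]
    exact smul_cancel S (ee_ne S hn) h2
  · rw [if_neg hn]

lemma eps_zero'' (n : ℤ) : eps S 0 n = 0 := eps_of_rep_zero' S (S.rep_zero n)

lemma cc_dd_zero {n : ℤ} (h : ¬(n ∈ Tset S ∧ (n + 1) ∈ Tset S)) :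
    cc S n = 0 ∧ dd S (n + 1) = 0 := by
  by_cases h1 : (n + 1) ∈ Tset S
  · have hn : n ∉ Tset S := fun hn => h ⟨hn, h1⟩
    constructor
    · unfold cc
      rw [ee_zero S hn, smul_zero]
      exact eps_zero'' S _
    · unfold dd
      rw [show n + 1 - 1 = n by ring]
      exact eps_not_mem S hn
  · constructor
    · unfold cc
      exact eps_not_mem S h1
    · unfold dd
      rw [ee_zero S h1, smul_zero]
      exact eps_zero'' S _

lemma tp_pow_ee_mem (j : ℕ) (n : ℤ) : G.tp ^ j • ee S n ∈ S.deg ((j : ℤ) + n) :=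
  S.smul_mem (G.tp_pow_mem j) (ee_mem S n)

lemma interval (hS : IsSimpleGr S) {n k m : ℤ} (hn : n ∈ Tset S) (hm : m ∈ Tset S)
    (h1 : n ≤ k) (h2 : k ≤ m) : k ∈ Tset S := by
  by_contra hk
  have h0 : G.tp ^ (k - n).toNat • ee S n = 0 := by
    refine deg_eq_zero S hk ?_
    have := tp_pow_ee_mem S (k - n).toNat n
    rwa [show (((k - n).toNat : ℤ) + n) = k by omega] at this
  have h1' : G.tp ^ (m - n).toNat • ee S n = 0 := by
    rw [show (m - n).toNat = (m - k).toNat + (k - n).toNat by omega, pow_add,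
      mul_smul, h0, smul_zero]
  obtain ⟨a, ha, hrep⟩ := rep_via_span S hS (ee_mem S n) (ee_ne S hn) (ee S m) m
  rw [S.rep_self (ee_mem S m)] at hrep
  rw [show m - n = (((m - n).toNat : ℕ) : ℤ) by omega] at ha
  obtain ⟨r, hra, -⟩ := G.free_pos (m - n).toNat a ha
  apply ee_ne S hm
  rw [hrep, hra, mul_smul, h1', smul_zero]

end Claims
section Xfun

open Classical
set_option linter.unusedSectionVars false

variable (S : GradedMod G) [Module ℂ S.M] (n₀ : ℤ)

def Ffun : ℕ → ℂ
  | 0 => 1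
  | (k+1) => Ffun k * dd S (n₀ + k + 1) / cc S (n₀ + k)

def Bfun : ℕ → ℂ
  | 0 => 1
  | (k+1) => Bfun k * cc S (n₀ - k - 1) / dd S (n₀ - k)

def xfun (n : ℤ) : ℂ :=
  if n₀ ≤ n then Ffun S n₀ (n - n₀).toNat else Bfun S n₀ (n₀ - n).toNat

lemma xfun_rel (hfg : Algebra.FiniteType ℂ R)
    (hsc : ∀ (c : ℂ) (m : S.M), c • m = algebraMap ℂ G.A c • m)
    (hS : IsSimpleGr S) (n : ℤ) :
    cc S n * xfun S n₀ (n + 1) = dd S (n + 1) * xfun S n₀ n := by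
  by_cases hT : n ∈ Tset S ∧ (n + 1) ∈ Tset S
  · obtain ⟨hn, hn1⟩ := hT
    have hc := cc_ne S hfg hsc hS hn hn1
    have hd := dd_ne S hfg hsc hS hn hn1
    by_cases h : n₀ ≤ n
    · set k := (n - n₀).toNat with hk
      have e1 : xfun S n₀ (n + 1) = Ffun S n₀ (k + 1) := by
        unfold xfun
        rw [if_pos (by omega)]
        congr 1
        omega
      have e2 : xfun S n₀ n = Ffun S n₀ k := by
        unfold xfun
        rw [if_pos h]
      rw [e1, e2, show Ffun S n₀ (k + 1) = Ffun S n₀ k * dd S (n₀ + k + 1) / cc S (n₀ + k) from rfl,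
        show (n₀ + (k : ℤ)) = n by omega]
      field_simp
    · set t := (n₀ - (n + 1)).toNat with ht
      have e1 : xfun S n₀ (n + 1) = Bfun S n₀ t := by
        unfold xfun
        by_cases h1 : n₀ ≤ n + 1
        · rw [if_pos h1, show (n + 1 - n₀).toNat = 0 by omega, show t = 0 by omega]
          rfl
        · rw [if_neg h1]
      have e2 : xfun S n₀ n = Bfun S n₀ (t + 1) := by
        unfold xfun
        rw [if_neg h]
        congr 1
        omega
      rw [e1, e2, show Bfun S n₀ (t + 1) = Bfun S n₀ t * cc S (n₀ - t - 1) / dd S (n₀ - t) from rfl,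
        show (n₀ - (t : ℤ)) = n + 1 by omega, show n + 1 - 1 = n by ring]
      field_simp
  · obtain ⟨h1, h2⟩ := cc_dd_zero S hT
    rw [h1, h2, zero_mul, zero_mul]

lemma Ffun_ne (hfg : Algebra.FiniteType ℂ R)
    (hsc : ∀ (c : ℂ) (m : S.M), c • m = algebraMap ℂ G.A c • m)
    (hS : IsSimpleGr S) (hn0 : n₀ ∈ Tset S) :
    ∀ k : ℕ, (n₀ + k) ∈ Tset S → Ffun S n₀ k ≠ 0 := by
  intro k
  induction k with
  | zero => exact fun _ => one_ne_zero
  | succ k ih =>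
    intro hk1
    have hk1' : (n₀ + (k : ℤ) + 1) ∈ Tset S := by
      rwa [show n₀ + (k : ℤ) + 1 = n₀ + ((k + 1 : ℕ) : ℤ) by push_cast; ring]
    have hk : (n₀ + (k : ℤ)) ∈ Tset S := interval S hS hn0 hk1' (by omega) (by omega)
    have hc := cc_ne S hfg hsc hS hk hk1'
    have hd := dd_ne S hfg hsc hS hk hk1'
    show Ffun S n₀ k * dd S (n₀ + k + 1) / cc S (n₀ + k) ≠ 0
    exact div_ne_zero (mul_ne_zero (ih hk) hd) hc

lemma Bfun_ne (hfg : Algebra.FiniteType ℂ R)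
    (hsc : ∀ (c : ℂ) (m : S.M), c • m = algebraMap ℂ G.A c • m)
    (hS : IsSimpleGr S) (hn0 : n₀ ∈ Tset S) :
    ∀ k : ℕ, (n₀ - k) ∈ Tset S → Bfun S n₀ k ≠ 0 := by
  intro k
  induction k with
  | zero => exact fun _ => one_ne_zero
  | succ k ih =>
    intro hk1
    have hk1' : (n₀ - (k : ℤ) - 1) ∈ Tset S := by
      rwa [show n₀ - (k : ℤ) - 1 = n₀ - ((k + 1 : ℕ) : ℤ) by push_cast; ring]
    have hk : (n₀ - (k : ℤ)) ∈ Tset S := interval S hS hk1' hn0 (by omega) (by omega)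
    have hc : cc S (n₀ - k - 1) ≠ 0 := by
      have := cc_ne S hfg hsc hS hk1' (by rwa [show n₀ - k - 1 + 1 = n₀ - k by ring])
      exact this
    have hd : dd S (n₀ - k) ≠ 0 := by
      have := dd_ne S hfg hsc hS hk1' (by rwa [show n₀ - k - 1 + 1 = n₀ - k by ring])
      rwa [show n₀ - k - 1 + 1 = n₀ - k by ring] at this
    show Bfun S n₀ k * cc S (n₀ - k - 1) / dd S (n₀ - k) ≠ 0
    exact div_ne_zero (mul_ne_zero (ih hk) hc) hd

lemma xfun_ne (hfg : Algebra.FiniteType ℂ R)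
    (hsc : ∀ (c : ℂ) (m : S.M), c • m = algebraMap ℂ G.A c • m)
    (hS : IsSimpleGr S) (hn0 : n₀ ∈ Tset S) {n : ℤ} (hn : n ∈ Tset S) :
    xfun S n₀ n ≠ 0 := by
  unfold xfun
  by_cases h : n₀ ≤ n
  · rw [if_pos h]
    refine Ffun_ne S n₀ hfg hsc hS hn0 _ ?_
    rwa [show (n₀ + ((n - n₀).toNat : ℤ)) = n by omega]
  · rw [if_neg h]
    refine Bfun_ne S n₀ hfg hsc hS hn0 _ ?_
    rwa [show (n₀ - ((n₀ - n).toNat : ℤ)) = n by omega]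

end Xfun
section Main
open Classical
set_option linter.unusedSectionVars false
set_option maxHeartbeats 1000000

theorem stmt7' {R : Type} [CommRing R] [Algebra ℂ R] (hfg : Algebra.FiniteType ℂ R)
    {σ : R ≃ₐ[ℂ] R} {v : R} (G : GWA R σ v)
    (iot : G.A →+* (G.A)ᵐᵒᵖ) (hbij : Function.Bijective iot)
    (hR : ∀ r : R, iot (G.emb r) = MulOpposite.op (G.emb r))
    (htp : iot G.tp = MulOpposite.op G.tm)
    (htm : iot G.tm = MulOpposite.op G.tp)
    (S : GradedMod G) [Module ℂ S.M]
    (hsc : ∀ (c : ℂ) (m : S.M), c • m = algebraMap ℂ G.A c • m)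
    (hS : IsSimpleGr S) :
    ∃ β : S.M →ₗ[ℂ] S.M →ₗ[ℂ] ℂ,
      (∀ i j : ℤ, i ≠ j → ∀ m ∈ S.deg i, ∀ m' ∈ S.deg j, β m m' = 0) ∧
      (∀ (a : G.A) (m m' : S.M), β m (a • m') = β ((iot a).unop • m) m') ∧
      (∀ n : ℤ, ∀ m ∈ S.deg n, m ≠ 0 → ∃ m' ∈ S.deg n, β m m' ≠ 0) ∧
      (∀ n : ℤ, ∀ m' ∈ S.deg n, m' ≠ 0 → ∃ m ∈ S.deg n, β m m' ≠ 0) := by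
  obtain ⟨n₀, hn0⟩ := Tset_nonempty S hS
  set x : ℤ → ℂ := xfun S n₀ with hx
  set bf : S.M → S.M → ℂ := fun m m' => ∑ᶠ n : ℤ, x n * eps S m n * eps S m' n with hbf
  have hfin : ∀ (m m' : S.M),
      (Function.support fun n => x n * eps S m n * eps S m' n).Finite := by
    intro m m'
    refine (eps_support S hfg hsc hS m).subset ?_
    intro n hn
    simp only [Function.mem_support] at hn
    intro h0
    apply hn
    rw [h0, mul_zero, zero_mul]
  have badd1 : ∀ m1 m2 m', bf (m1 + m2) m' = bf m1 m' + bf m2 m' := by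
    intro m1 m2 m'
    rw [hbf]
    simp only
    rw [← finsum_add_distrib (hfin m1 m') (hfin m2 m')]
    refine finsum_congr fun n => ?_
    rw [eps_add S hfg hsc hS]
    ring
  have bsmul1 : ∀ (c : ℂ) (m m' : S.M), bf (c • m) m' = c * bf m m' := by
    intro c m m'
    rw [hbf]
    simp only
    rw [mul_finsum _ c]
    refine finsum_congr fun n => ?_
    rw [eps_csmul S hfg hsc hS]
    ring
  have badd2 : ∀ m m1 m2, bf m (m1 + m2) = bf m m1 + bf m m2 := by
    intro m m1 m2
    rw [hbf]
    simp only
    rw [← finsum_add_distrib (hfin m m1) (hfin m m2)]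
    refine finsum_congr fun n => ?_
    rw [eps_add S hfg hsc hS]
    ring
  have bsmul2 : ∀ (c : ℂ) (m m' : S.M), bf m (c • m') = c * bf m m' := by
    intro c m m'
    rw [hbf]
    simp only
    rw [mul_finsum _ c]
    refine finsum_congr fun n => ?_
    rw [eps_csmul S hfg hsc hS]
    ring
  refine ⟨LinearMap.mk₂ ℂ bf badd1 (fun c m m' => by rw [bsmul1, smul_eq_mul])
      badd2 (fun c m m' => by rw [bsmul2, smul_eq_mul]), ?_, ?_, ?_, ?_⟩
  · -- vanishing on distinct degrees
    intro i j hij m hm m' hm'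
    simp only [LinearMap.mk₂_apply]
    refine finsum_eq_zero_of_forall_eq_zero fun n => ?_
    by_cases hni : n = i
    · subst hni
      rw [eps_ne S hfg hsc hS hm' hij, mul_zero]
    · rw [eps_ne S hfg hsc hS hm hni, mul_zero, zero_mul]
  · -- adjointness
    simp only [LinearMap.mk₂_apply]
    set P : G.A → Prop := fun a => ∀ m m' : S.M, bf m (a • m') = bf ((iot a).unop • m) m'
      with hP
    have bzero1 : ∀ m', bf 0 m' = 0 := by
      intro m'
      refine finsum_eq_zero_of_forall_eq_zero fun n => ?_
      rw [eps_zero'' S, mul_zero, zero_mul]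
    have bzero2 : ∀ m, bf m 0 = 0 := by
      intro m
      refine finsum_eq_zero_of_forall_eq_zero fun n => ?_
      rw [eps_zero'' S, mul_zero]
    have hzero : P 0 := by
      intro m m'
      rw [zero_smul, bzero2, map_zero, MulOpposite.unop_zero, zero_smul, bzero1]
    have hadd : ∀ a b : G.A, P a → P b → P (a + b) := by
      intro a c Pa Pc m m'
      rw [add_smul, badd2, Pa, Pc, map_add, MulOpposite.unop_add, add_smul, badd1]
    have hmul : ∀ a b : G.A, P a → P b → P (a * b) := by
      intro a c Pa Pc m m'
      rw [mul_smul, Pa, Pc, map_mul, MulOpposite.unop_mul, mul_smul]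
    have hemb : ∀ r : R, P (G.emb r) := by
      intro r m m'
      rw [hR r, MulOpposite.unop_op]
      calc bf m (G.emb r • m')
          = ∑ᶠ n : ℤ, x n * (chr S n r * eps S m n) * eps S m' n := by
            refine finsum_congr fun n => ?_
            rw [eps_emb S hfg hsc hS]
            ring
        _ = bf (G.emb r • m) m' := by
            refine finsum_congr fun n => ?_
            rw [eps_emb S hfg hsc hS]
    have hkey : ∀ (m m' : S.M) (n : ℤ), x n * eps S (G.tm • m) n * eps S m' n
        = x (n + 1) * eps S m (n + 1) * eps S (G.tp • m') (n + 1) := by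
      intro m m' n
      rw [eps_tm S hfg hsc hS, eps_tp S hfg hsc hS, show n + 1 - 1 = n by ring]
      have hrel := xfun_rel S n₀ hfg hsc hS n
      rw [hx]
      linear_combination (-(eps S m (n + 1) * eps S m' n)) * hrel
    have htpP : P G.tp := by
      intro m m'
      rw [htp, MulOpposite.unop_op]
      calc bf m (G.tp • m')
          = ∑ᶠ n : ℤ, x n * eps S m n * eps S (G.tp • m') n := rfl
        _ = ∑ᶠ n : ℤ, x n * eps S (G.tm • m) n * eps S m' n := by
            rw [← finsum_comp_equiv (Equiv.addRight (1 : ℤ))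
              (f := fun n => x n * eps S m n * eps S (G.tp • m') n)]
            refine finsum_congr fun n => ?_
            exact (hkey m m' n).symm
        _ = bf (G.tm • m) m' := rfl
    have hkey2 : ∀ (m m' : S.M) (n : ℤ), x n * eps S m n * eps S (G.tm • m') n
        = x (n + 1) * eps S (G.tp • m) (n + 1) * eps S m' (n + 1) := by
      intro m m' n
      rw [eps_tm S hfg hsc hS, eps_tp S hfg hsc hS, show n + 1 - 1 = n by ring]
      have hrel := xfun_rel S n₀ hfg hsc hS n
      rw [hx]
      linear_combination (-(eps S m n * eps S m' (n + 1))) * hrel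
    have htmP : P G.tm := by
      intro m m'
      rw [htm, MulOpposite.unop_op]
      calc bf m (G.tm • m')
          = ∑ᶠ n : ℤ, x n * eps S m n * eps S (G.tm • m') n := rfl
        _ = ∑ᶠ n : ℤ, x n * eps S (G.tp • m) n * eps S m' n := by
            rw [← finsum_comp_equiv (Equiv.addRight (1 : ℤ))
              (f := fun n => x n * eps S (G.tp • m) n * eps S m' n)]
            refine finsum_congr fun n => ?_
            exact hkey2 m m' n
        _ = bf (G.tp • m) m' := rfl
    have hone : P 1 := by
      have := hemb 1
      rwa [map_one] at this
    have hppow : ∀ k : ℕ, P (G.tp ^ k) := by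
      intro k
      induction k with
      | zero => rw [pow_zero]; exact hone
      | succ k ih => rw [pow_succ]; exact hmul _ _ ih htpP
    have hmpow : ∀ k : ℕ, P (G.tm ^ k) := by
      intro k
      induction k with
      | zero => rw [pow_zero]; exact hone
      | succ k ih => rw [pow_succ]; exact hmul _ _ ih htmP
    have hhom : ∀ (i : ℤ) (a : G.A), a ∈ G.deg i → P a := by
      intro i a ha
      rcases le_or_gt 0 i with hi | hi
      · have ha' : a ∈ G.deg ((i.toNat : ℕ) : ℤ) := by
          rwa [show ((i.toNat : ℕ) : ℤ) = i by omega]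
        obtain ⟨r, hra, -⟩ := G.free_pos i.toNat a ha'
        rw [hra]
        exact hmul _ _ (hemb r) (hppow _)
      · have ha' : a ∈ G.deg (-(((-i).toNat : ℕ) : ℤ)) := by
          rwa [show (-(((-i).toNat : ℕ) : ℤ)) = i by omega]
        obtain ⟨r, hra, -⟩ := G.free_neg (-i).toNat a ha'
        rw [hra]
        exact hmul _ _ (hemb r) (hmpow _)
    intro a m m'
    obtain ⟨s, g, hg, rfl⟩ := G.decomp a
    exact Finset.sum_induction g P hadd hzero (fun i _ => hhom i (g i) (hg i)) m m'
  · -- nondegeneracy in the first variable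
    intro n m hm hm0
    have hnT : n ∈ Tset S := ⟨m, hm, hm0⟩
    refine ⟨ee S n, ee_mem S n, ?_⟩
    simp only [LinearMap.mk₂_apply]
    have hsingle : ∀ k : ℤ, k ≠ n → x k * eps S m k * eps S (ee S n) k = 0 := by
      intro k hk
      rw [eps_ne S hfg hsc hS (ee_mem S n) hk, mul_zero]
    rw [hbf]
    simp only
    rw [finsum_eq_single _ n hsingle, eps_self S hfg hsc hS hnT, mul_one]
    have hxne := xfun_ne S n₀ hfg hsc hS hn0 hnT
    have hem : eps S m n ≠ 0 := by
      intro h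
      apply hm0
      rw [eps_homog S hfg hsc hS hm hnT, h, zero_smul]
    exact mul_ne_zero hxne hem
  · -- nondegeneracy in the second variable
    intro n m' hm' hm0
    have hnT : n ∈ Tset S := ⟨m', hm', hm0⟩
    refine ⟨ee S n, ee_mem S n, ?_⟩
    simp only [LinearMap.mk₂_apply]
    have hsingle : ∀ k : ℤ, k ≠ n → x k * eps S (ee S n) k * eps S m' k = 0 := by
      intro k hk
      rw [eps_ne S hfg hsc hS (ee_mem S n) hk, mul_zero, zero_mul]
    rw [hbf]
    simp only
    rw [finsum_eq_single _ n hsingle, eps_self S hfg hsc hS hnT, mul_one]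
    have hxne := xfun_ne S n₀ hfg hsc hS hn0 hnT
    have hem : eps S m' n ≠ 0 := by
      intro h
      apply hm0
      rw [eps_homog S hfg hsc hS hm' hnT, h, zero_smul]
    exact mul_ne_zero hxne hem

end Main

/-- Every simple graded module is isomorphic to its graded dual.
Since the homogeneous components of a simple graded module are finite-dimensional, an
isomorphism `S ≅ S*` of graded modules is the same thing as a `ℂ`-bilinear pairing
`β : S × S → ℂ` which vanishes on pairs of components of distinct degrees, is perfect on
each component, and satisfies `β(m, a•m') = β(ι(a)•m, m')` for the anti-involution `ι`. -/
theorem stmt7 {R : Type} [CommRing R] [Algebra ℂ R] (hfg : Algebra.FiniteType ℂ R)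
    {σ : R ≃ₐ[ℂ] R} {v : R} (G : GWA R σ v)
    (iot : G.A →+* (G.A)ᵐᵒᵖ) (hbij : Function.Bijective iot)
    (hR : ∀ r : R, iot (G.emb r) = MulOpposite.op (G.emb r))
    (htp : iot G.tp = MulOpposite.op G.tm)
    (htm : iot G.tm = MulOpposite.op G.tp)
    (S : GradedMod G) [Module ℂ S.M]
    (hsc : ∀ (c : ℂ) (m : S.M), c • m = algebraMap ℂ G.A c • m)
    (hS : IsSimpleGr S) :
    ∃ β : S.M →ₗ[ℂ] S.M →ₗ[ℂ] ℂ,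
      (∀ i j : ℤ, i ≠ j → ∀ m ∈ S.deg i, ∀ m' ∈ S.deg j, β m m' = 0) ∧
      (∀ (a : G.A) (m m' : S.M), β m (a • m') = β ((iot a).unop • m) m') ∧
      (∀ n : ℤ, ∀ m ∈ S.deg n, m ≠ 0 → ∃ m' ∈ S.deg n, β m m' ≠ 0) ∧
      (∀ n : ℤ, ∀ m' ∈ S.deg n, m' ≠ 0 → ∃ m ∈ S.deg n, β m m' ≠ 0) := by
  exact stmt7' hfg G iot hbij hR htp htm S hsc hS
end
end

section
/- If S and T are adjacent simple graded subquotients of A^λ, then Ext¹_gr(S, T) ≠ 0. -/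
noncomputable section

variable {R : Type} [CommRing R] [Algebra ℂ R] {σ : R ≃ₐ[ℂ] R} {v : R}

variable {G : GWA R σ v}

/-- `δ(M) = {i : M_i ≠ 0}`. -/
def deltaSet (X : GradedMod G) : Set ℤ := {i : ℤ | X.deg i ≠ ⊥}

/-- An interval of `ℤ` (possibly unbounded): a convex subset. -/
def IsIntervalZ (s : Set ℤ) : Prop := ∀ a ∈ s, ∀ b ∈ s, ∀ c : ℤ, a ≤ c → c ≤ b → c ∈ s

/-- A graded extension `0 → T → E → S → 0` (all maps degree-preserving). -/
structure GExt1 (S T : GradedMod G) : Type 1 where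
  E : GradedMod G
  f : GHom T E 0
  g : GHom E S 0
  inj : Function.Injective f.toLin
  exact : Function.Exact f.toLin g.toLin
  surj : Function.Surjective g.toLin

/-- A graded extension splits if the surjection admits a graded section. -/
def GExt1.Split {S T : GradedMod G} (e : GExt1 S T) : Prop :=
  ∃ s : GHom S e.E 0, e.g.toLin ∘ₗ s.toLin = LinearMap.id
namespace GradedMod

variable (Y : GradedMod G)

noncomputable def supp_s8 (m : Y.M) : Finset ℤ := (Y.decomp m).choose

noncomputable def cfn (m : Y.M) : ℤ → Y.M := (Y.decomp m).choose_spec.choose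

lemma cfn_spec (m : Y.M) : (∀ i, Y.cfn m i ∈ Y.deg i) ∧ m = ∑ i ∈ Y.supp_s8 m, Y.cfn m i :=
  (Y.decomp m).choose_spec.choose_spec

noncomputable def comp (m : Y.M) (i : ℤ) : Y.M := if i ∈ Y.supp_s8 m then Y.cfn m i else 0

lemma ite_unique {s s' : Finset ℤ} {g g' : ℤ → Y.M} (hg : ∀ i, g i ∈ Y.deg i)
    (hg' : ∀ i, g' i ∈ Y.deg i) (h : ∑ i ∈ s, g i = ∑ i ∈ s', g' i) (i : ℤ) :
    (if i ∈ s then g i else 0) = (if i ∈ s' then g' i else 0) := by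
  classical
  set F : ℤ → Y.M := fun j => (if j ∈ s then g j else 0) - (if j ∈ s' then g' j else 0) with hF
  have hFm : ∀ j, F j ∈ Y.deg j := by
    intro j
    refine sub_mem ?_ ?_ <;> (split_ifs with h1) <;> first | exact hg j | exact hg' j | exact zero_mem _
  have hsum : ∑ j ∈ s ∪ s', F j = 0 := by
    rw [Finset.sum_sub_distrib, Finset.sum_ite_mem, Finset.sum_ite_mem,
      Finset.union_inter_cancel_left, Finset.union_inter_cancel_right, h, sub_self]
  by_cases hi : i ∈ s ∪ s'
  · have := Y.indep _ F hFm hsum i hi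
    exact sub_eq_zero.mp this
  · rw [Finset.mem_union] at hi
    push_neg at hi
    rw [if_neg hi.1, if_neg hi.2]

lemma comp_eq {s : Finset ℤ} {g : ℤ → Y.M} (hg : ∀ i, g i ∈ Y.deg i) {m : Y.M}
    (h : m = ∑ i ∈ s, g i) (i : ℤ) : Y.comp m i = if i ∈ s then g i else 0 := by
  have := Y.ite_unique (Y.cfn_spec m).1 hg ((Y.cfn_spec m).2.symm.trans h) i
  simpa [comp] using this

lemma comp_mem (m : Y.M) (i : ℤ) : Y.comp m i ∈ Y.deg i := by
  unfold comp; split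
  · exact (Y.cfn_spec m).1 i
  · exact zero_mem _

lemma sum_comp (m : Y.M) : m = ∑ i ∈ Y.supp_s8 m, Y.comp m i := by
  have h : ∑ i ∈ Y.supp_s8 m, Y.comp m i = ∑ i ∈ Y.supp_s8 m, Y.cfn m i :=
    Finset.sum_congr rfl fun i hi => by simp [comp, hi]
  rw [h]
  exact (Y.cfn_spec m).2

lemma comp_of_not_mem_supp {m : Y.M} {i : ℤ} (h : i ∉ Y.supp_s8 m) : Y.comp m i = 0 := by
  simp [comp, h]

lemma comp_zero (i : ℤ) : Y.comp 0 i = 0 := by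
  have := Y.comp_eq (s := (∅ : Finset ℤ)) (g := fun _ => (0 : Y.M)) (m := 0)
    (fun i => zero_mem _) (by simp) i
  simpa using this

lemma comp_add (m n : Y.M) (i : ℤ) : Y.comp (m + n) i = Y.comp m i + Y.comp n i := by
  classical
  have hsub1 : ∑ j ∈ Y.supp_s8 m ∪ Y.supp_s8 n, Y.comp m j = m := by
    rw [← Finset.sum_subset Finset.subset_union_left
      (fun x _ hx => Y.comp_of_not_mem_supp hx)]
    exact (Y.sum_comp m).symm
  have hsub2 : ∑ j ∈ Y.supp_s8 m ∪ Y.supp_s8 n, Y.comp n j = n := by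
    rw [← Finset.sum_subset Finset.subset_union_right
      (fun x _ hx => Y.comp_of_not_mem_supp hx)]
    exact (Y.sum_comp n).symm
  have h : m + n = ∑ j ∈ Y.supp_s8 m ∪ Y.supp_s8 n, (Y.comp m j + Y.comp n j) := by
    rw [Finset.sum_add_distrib, hsub1, hsub2]
  have := Y.comp_eq (fun j => add_mem (Y.comp_mem m j) (Y.comp_mem n j)) h i
  rw [this]
  split_ifs with hi
  · rfl
  · rw [Finset.mem_union] at hi; push_neg at hi
    rw [Y.comp_of_not_mem_supp hi.1, Y.comp_of_not_mem_supp hi.2, add_zero]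

lemma comp_neg (m : Y.M) (i : ℤ) : Y.comp (-m) i = -Y.comp m i := by
  have := Y.comp_add m (-m) i
  rw [add_neg_cancel, Y.comp_zero] at this
  exact eq_neg_of_add_eq_zero_right this.symm

lemma comp_homog {m : Y.M} {i : ℤ} (hm : m ∈ Y.deg i) :
    Y.comp m i = m ∧ ∀ j, j ≠ i → Y.comp m j = 0 := by
  classical
  have hg : ∀ j, (if j = i then m else 0) ∈ Y.deg j := fun j => by
    split_ifs with h
    · subst h; exact hm
    · exact zero_mem _
  have h : m = ∑ j ∈ {i}, (if j = i then m else 0) := by simp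
  have hc := Y.comp_eq hg h
  constructor
  · simpa using hc i
  · intro j hj
    simpa [hj] using hc j

lemma sum_mem_deg {s : Finset ℤ} {g : ℤ → Y.M} (hg : ∀ i, g i ∈ Y.deg i) {k : ℤ}
    (hk : ∑ i ∈ s, g i ∈ Y.deg k) :
    (∀ j ∈ s, j ≠ k → g j = 0) ∧ (∑ i ∈ s, g i = if k ∈ s then g k else 0) := by
  have hc := Y.comp_eq hg (rfl : ∑ i ∈ s, g i = ∑ i ∈ s, g i)
  have hh := Y.comp_homog hk
  constructor
  · intro j hj hjk
    have h1 := hh.2 j hjk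
    rw [hc j, if_pos hj] at h1
    exact h1
  · have := hh.1
    rw [hc k] at this
    exact this.symm

lemma exists_ne_zero_of_ne_bot {i : ℤ} (h : Y.deg i ≠ ⊥) : ∃ m ∈ Y.deg i, m ≠ 0 := by
  by_contra hc
  push_neg at hc
  exact h (by
    ext x
    simp only [AddSubgroup.mem_bot]
    exact ⟨fun hx => hc x hx, fun hx => hx ▸ zero_mem _⟩)

end GradedMod

def GWA.self (G : GWA R σ v) : GradedMod G where
  M := G.A
  deg := G.deg
  smul_mem := fun {i j a m} ha hm => by
    simpa [smul_eq_mul] using G.mul_mem ha hm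
  decomp := G.decomp
  indep := G.indep

abbrev acomp (a : G.A) (i : ℤ) : G.A := (GWA.self G).comp a i

abbrev asupp (a : G.A) : Finset ℤ := (GWA.self G).supp_s8 a

lemma acomp_mem (a : G.A) (i : ℤ) : acomp a i ∈ G.deg i := (GWA.self G).comp_mem a i

lemma acomp_not_supp {a : G.A} {i : ℤ} (h : i ∉ asupp a) : acomp a i = 0 :=
  (GWA.self G).comp_of_not_mem_supp h

lemma acomp_zero (i : ℤ) : acomp (0 : G.A) i = 0 := (GWA.self G).comp_zero i

lemma acomp_add (a b : G.A) (i : ℤ) : acomp (a + b) i = acomp a i + acomp b i :=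
  (GWA.self G).comp_add a b i

lemma acomp_eq {s : Finset ℤ} {g : ℤ → G.A} (hg : ∀ i, g i ∈ G.deg i) {a : G.A}
    (h : a = ∑ i ∈ s, g i) (i : ℤ) : acomp a i = if i ∈ s then g i else 0 :=
  (GWA.self G).comp_eq hg h i

lemma acomp_homog {a : G.A} {i : ℤ} (ha : a ∈ G.deg i) :
    acomp a i = a ∧ ∀ j, j ≠ i → acomp a j = 0 := (GWA.self G).comp_homog ha

lemma sum_acomp (a : G.A) : a = ∑ i ∈ asupp a, acomp a i := (GWA.self G).sum_comp a

lemma smul_comp_eq {Y : GradedMod G} (m₀ : Y.M) (a : G.A) :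
    a • m₀ = ∑ k ∈ asupp a, acomp a k • m₀ := by
  conv_lhs => rw [sum_acomp a]
  rw [Finset.sum_smul]

lemma acomp_smul_mem {Y : GradedMod G} {m₀ : Y.M} {i₀ : ℤ} (hm : m₀ ∈ Y.deg i₀)
    (a : G.A) (i : ℤ) : acomp a (i - i₀) • m₀ ∈ Y.deg i := by
  have := Y.smul_mem (acomp_mem a (i - i₀)) hm
  simpa [sub_add_cancel] using this

lemma smul_decomp_image {Y : GradedMod G} {m₀ : Y.M} (i₀ : ℤ) (a : G.A) :
    a • m₀ = ∑ i ∈ (asupp a).image (· + i₀), acomp a (i - i₀) • m₀ := by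
  rw [Finset.sum_image (by intro x _ y _ h; beta_reduce at h; omega)]
  simpa [add_sub_cancel_right] using smul_comp_eq m₀ a

lemma smul_homog_comps {Y : GradedMod G} {m₀ : Y.M} {i₀ : ℤ} (hm : m₀ ∈ Y.deg i₀) {a : G.A}
    (h : a • m₀ = 0) (k : ℤ) : acomp a k • m₀ = 0 := by
  by_cases hk : k ∈ asupp a
  · have hsum : ∑ i ∈ (asupp a).image (· + i₀), acomp a (i - i₀) • m₀ = 0 :=
      (smul_decomp_image i₀ a).symm.trans h
    have := Y.indep _ _ (fun i => acomp_smul_mem hm a i) hsum (k + i₀)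
      (Finset.mem_image_of_mem _ hk)
    simpa [add_sub_cancel_right] using this
  · rw [acomp_not_supp hk, zero_smul]

lemma smul_homog_eq {Y : GradedMod G} {m₀ : Y.M} {i₀ : ℤ} (hm : m₀ ∈ Y.deg i₀) {a : G.A} {j : ℤ}
    (hj : a • m₀ ∈ Y.deg j) : a • m₀ = acomp a (j - i₀) • m₀ := by
  have hform := smul_decomp_image (Y := Y) (m₀ := m₀) i₀ a
  rw [hform] at hj
  have := (Y.sum_mem_deg (fun i => acomp_smul_mem hm a i) hj).2
  rw [hform, this]
  split_ifs with hmem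
  · rfl
  · have : j - i₀ ∉ asupp a := by
      intro hc
      exact hmem (by simpa [sub_add_cancel] using Finset.mem_image_of_mem (· + i₀) hc)
    rw [acomp_not_supp this, zero_smul]

-- ### A-side lemmas

lemma deg_cast {a : G.A} {i j : ℤ} (h : a ∈ G.deg i) (hij : i = j) : a ∈ G.deg j := hij ▸ h

lemma one_mem_deg : (1 : G.A) ∈ G.deg 0 := by
  simpa using G.algmap_mem 1

lemma tp_pow_mem (n : ℕ) : G.tp ^ n ∈ G.deg (n : ℤ) := by
  induction n with
  | zero => simpa using one_mem_deg
  | succ n ih =>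
    rw [pow_succ]
    exact deg_cast (G.mul_mem ih G.tp_mem) (by push_cast; ring)

lemma tm_pow_mem (n : ℕ) : G.tm ^ n ∈ G.deg (-(n : ℤ)) := by
  induction n with
  | zero => simpa using one_mem_deg
  | succ n ih =>
    rw [pow_succ]
    exact deg_cast (G.mul_mem ih G.tm_mem) (by push_cast; ring)

lemma emb_tp_pow (u : R) (n : ℕ) : G.emb u * G.tp ^ n = G.tp ^ n * G.emb ((σ ^ n) u) := by
  induction n with
  | zero => simp
  | succ n ih =>
    calc G.emb u * G.tp ^ (n + 1) = (G.emb u * G.tp ^ n) * G.tp := by rw [pow_succ, mul_assoc]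
      _ = G.tp ^ n * (G.emb ((σ ^ n) u) * G.tp) := by rw [ih, mul_assoc]
      _ = G.tp ^ n * (G.tp * G.emb (σ ((σ ^ n) u))) := by rw [G.rel1]
      _ = G.tp ^ (n + 1) * G.emb ((σ ^ (n + 1)) u) := by
          rw [← mul_assoc, ← pow_succ]
          congr 1
          rw [← AlgEquiv.mul_apply, ← pow_succ']

lemma emb_tm_single (u : R) : G.emb u * G.tm = G.tm * G.emb (σ.symm u) := by
  have := G.rel2 (σ.symm u)
  rwa [AlgEquiv.apply_symm_apply] at this

lemma emb_tm_pow (u : R) (n : ℕ) : G.emb u * G.tm ^ n = G.tm ^ n * G.emb ((σ.symm ^ n) u) := by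
  induction n with
  | zero => simp
  | succ n ih =>
    calc G.emb u * G.tm ^ (n + 1) = (G.emb u * G.tm ^ n) * G.tm := by rw [pow_succ, mul_assoc]
      _ = G.tm ^ n * (G.emb ((σ.symm ^ n) u) * G.tm) := by rw [ih, mul_assoc]
      _ = G.tm ^ n * (G.tm * G.emb (σ.symm ((σ.symm ^ n) u))) := by rw [emb_tm_single]
      _ = G.tm ^ (n + 1) * G.emb ((σ.symm ^ (n + 1)) u) := by
          rw [← mul_assoc, ← pow_succ]
          congr 1
          rw [← AlgEquiv.mul_apply, ← pow_succ']

lemma sigma_pow_symm_pow (n : ℕ) (r : R) : (σ ^ n) ((σ.symm ^ n) r) = r := by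
  have h : σ.symm = σ⁻¹ := rfl
  rw [← AlgEquiv.mul_apply, h, inv_pow, mul_inv_cancel]
  exact AlgEquiv.one_apply r

lemma tp_pow_emb (w : R) (p : ℕ) : G.tp ^ p * G.emb w = G.emb ((σ.symm ^ p) w) * G.tp ^ p := by
  rw [emb_tp_pow ((σ.symm ^ p) w) p, sigma_pow_symm_pow]

lemma sigma_symm_pow_zpow (n : ℕ) : (σ.symm ^ n : R ≃ₐ[ℂ] R) = σ ^ (-(n : ℤ)) := by
  have h : σ.symm = σ⁻¹ := rfl
  rw [h, inv_pow, ← zpow_natCast, ← zpow_neg]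

lemma sigma_zpow_comp (i : ℤ) (n : ℕ) (r : R) :
    (σ ^ i) ((σ.symm ^ n) r) = (σ ^ (i - (n : ℤ))) r := by
  rw [sigma_symm_pow_zpow, ← AlgEquiv.mul_apply, ← zpow_add, ← sub_eq_add_neg]

lemma sigma_npow_zpow (n : ℕ) (r : R) : (σ ^ n) r = (σ ^ (n : ℤ)) r := by
  rw [← zpow_natCast]

lemma sigma_symm_npow_zpow (n : ℕ) (r : R) : (σ.symm ^ n) r = (σ ^ (-(n : ℤ))) r := by
  rw [sigma_symm_pow_zpow]

def Vv (σ : R ≃ₐ[ℂ] R) (v : R) : ℕ → R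
  | 0 => 1
  | n + 1 => (σ.symm ^ n) v * Vv σ v n

lemma tp_pow_tm_pow (n : ℕ) : G.tp ^ n * G.tm ^ n = G.emb (Vv σ v n) := by
  induction n with
  | zero => simp [Vv]
  | succ n ih =>
    rw [pow_succ, pow_succ', mul_assoc, ← mul_assoc G.tp, G.rel4, ← mul_assoc,
      tp_pow_emb, mul_assoc, ih, ← map_mul]
    rfl

lemma tp_right_cancel {n : ℕ} {c c' : G.A} (hc : c ∈ G.deg (n : ℤ)) (hc' : c' ∈ G.deg (n : ℤ))
    (h : c * G.tp = c' * G.tp) : c = c' := by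
  obtain ⟨r, hr, -⟩ := G.free_pos n c hc
  obtain ⟨r', hr', -⟩ := G.free_pos n c' hc'
  have hmem : c * G.tp ∈ G.deg ((n + 1 : ℕ) : ℤ) :=
    deg_cast (G.mul_mem hc G.tp_mem) (by push_cast; ring)
  obtain ⟨r'', -, hu⟩ := G.free_pos (n + 1) (c * G.tp) hmem
  have e1 : c * G.tp = G.emb r * G.tp ^ (n + 1) := by
    rw [hr, pow_succ, mul_assoc]
  have e2 : c * G.tp = G.emb r' * G.tp ^ (n + 1) := by
    rw [h, hr', pow_succ, mul_assoc]
  have : r = r' := (hu r e1).trans (hu r' e2).symm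
  rw [hr, hr', this]

-- ### Nullstellensatz character

lemma exists_chi {R : Type} [CommRing R] [Algebra ℂ R] (hfg : Algebra.FiniteType ℂ R)
    (lam : Ideal R) (hlam : lam.IsMaximal) :
    ∃ χ : R → ℂ, (∀ r, r - algebraMap ℂ R (χ r) ∈ lam) ∧ ∀ r, (χ r = 0 ↔ r ∈ lam) := by
  haveI := hlam
  letI : Field (R ⧸ lam) := Ideal.Quotient.field lam
  haveI : Algebra.FiniteType ℂ (R ⧸ lam) :=
    Algebra.FiniteType.of_surjective (Ideal.Quotient.mkₐ ℂ lam)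
      (Ideal.Quotient.mkₐ_surjective ℂ lam)
  haveI : Module.Finite ℂ (R ⧸ lam) := finite_of_finite_type_of_isJacobsonRing ℂ _
  haveI : Algebra.IsIntegral ℂ (R ⧸ lam) := Algebra.IsIntegral.of_finite ℂ _
  have hsurj := (IsAlgClosed.algebraMap_bijective_of_isIntegral (k := ℂ) (K := R ⧸ lam)).2
  choose χ hχ using fun r => hsurj (Ideal.Quotient.mk lam r)
  have halg : ∀ c : ℂ, Ideal.Quotient.mk lam (algebraMap ℂ R c) = algebraMap ℂ (R ⧸ lam) c :=
    fun c => by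
      rw [IsScalarTower.algebraMap_apply ℂ R (R ⧸ lam)]
      rfl
  refine ⟨χ, fun r => ?_, fun r => ?_⟩
  · have : Ideal.Quotient.mk lam (r - algebraMap ℂ R (χ r)) = 0 := by
      rw [map_sub, halg, hχ r, sub_self]
    exact Ideal.Quotient.eq_zero_iff_mem.mp this
  · constructor
    · intro h0
      have := hχ r
      rw [h0, map_zero] at this
      exact Ideal.Quotient.eq_zero_iff_mem.mp this.symm
    · intro hr
      have h1 : algebraMap ℂ (R ⧸ lam) (χ r) = 0 :=
        (hχ r).trans (Ideal.Quotient.eq_zero_iff_mem.mpr hr)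
      have h2 : algebraMap ℂ (R ⧸ lam) (χ r) = algebraMap ℂ (R ⧸ lam) 0 := by
        rw [h1, map_zero]
      exact (algebraMap ℂ (R ⧸ lam)).injective h2

-- ### scalar action lemmas

lemma alg_smul_cancel {Y : GradedMod G} {c : ℂ} {m : Y.M}
    (h : algebraMap ℂ G.A c • m = 0) (hc : c ≠ 0) : m = 0 := by
  have : algebraMap ℂ G.A c⁻¹ • (algebraMap ℂ G.A c • m) = m := by
    rw [smul_smul, ← map_mul, inv_mul_cancel₀ hc, map_one, one_smul]
  rw [h, smul_zero] at this
  exact this.symm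

lemma alg_smul_eq_zero {Y : GradedMod G} {c : ℂ} {m : Y.M}
    (h : algebraMap ℂ G.A c • m = 0) (hm : m ≠ 0) : c = 0 := by
  by_contra hc
  exact hm (alg_smul_cancel h hc)

-- ### simple graded modules

lemma simple_cyclic {Y : GradedMod G} (hs : IsSimpleGr Y) {m₀ : Y.M} {i₀ : ℤ}
    (hm : m₀ ∈ Y.deg i₀) (h0 : m₀ ≠ 0) (m : Y.M) : ∃ a : G.A, a • m₀ = m := by
  have hgr : IsGradedSub Y (Submodule.span G.A {m₀}) := by
    intro n hn
    rw [Submodule.mem_span_singleton] at hn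
    obtain ⟨a, rfl⟩ := hn
    refine ⟨(asupp a).image (· + i₀), fun i => acomp a (i - i₀) • m₀,
      fun i => acomp_smul_mem hm a i,
      fun i => Submodule.smul_mem _ _ (Submodule.mem_span_singleton_self m₀),
      smul_decomp_image i₀ a⟩
  rcases hs.2 _ hgr with h | h
  · exfalso
    have := Submodule.mem_span_singleton_self (R := G.A) m₀
    rw [h, Submodule.mem_bot] at this
    exact h0 this
  · have : m ∈ Submodule.span G.A {m₀} := by rw [h]; trivial
    exact Submodule.mem_span_singleton.mp this

lemma simple_interval {Y : GradedMod G} (hs : IsSimpleGr Y) : IsIntervalZ (deltaSet Y) := by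
  intro a ha b hb c hac hcb
  by_contra hc
  have hgap : Y.deg c = ⊥ := by
    by_contra h
    exact hc h
  -- the submodule of elements supported in degrees < c
  have memP : ∀ (m : Y.M), (∀ i, c ≤ i → Y.comp m i = 0) → ∀ (x : G.A) (k d : ℤ),
      acomp x k • Y.comp m d ∈ {m' : Y.M | ∀ i, c ≤ i → Y.comp m' i = 0} := by
    intro m hm x k d
    by_cases hz : Y.comp m d = 0
    · intro i hi
      rw [hz, smul_zero, Y.comp_zero]
    have hd : d < c := by
      by_contra h
      exact hz (hm d (by omega))
    have hmem : acomp x k • Y.comp m d ∈ Y.deg (k + d) := Y.smul_mem (acomp_mem x k) (Y.comp_mem m d)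
    by_cases hkd : k + d < c
    · intro i hi
      rcases (Y.comp_homog hmem) with ⟨h1, h2⟩
      exact h2 i (by omega)
    · -- k ≥ 1, the product passes through degree c and vanishes
      have hk1 : (1 : ℤ) ≤ k := by omega
      have heq : acomp x k • Y.comp m d = 0 := by
        obtain ⟨r, hr, -⟩ := G.free_pos k.toNat (acomp x k)
          (deg_cast (acomp_mem x k) (by omega))
        set p : ℕ := (c - d).toNat with hp
        have hpk : p ≤ k.toNat := by omega
        have hsplit : G.tp ^ k.toNat = G.tp ^ (k.toNat - p) * G.tp ^ p := by
          rw [← pow_add]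
          congr 1
          omega
        have hzero : G.tp ^ p • Y.comp m d = 0 := by
          have : G.tp ^ p • Y.comp m d ∈ Y.deg ((p : ℤ) + d) :=
            Y.smul_mem (tp_pow_mem p) (Y.comp_mem m d)
          have hpc : (p : ℤ) + d = c := by omega
          rw [hpc] at this
          rw [hgap] at this
          simpa using this
        rw [hr, hsplit, ← mul_assoc, mul_smul, mul_smul, hzero, smul_zero, smul_zero]
      intro i hi
      rw [heq, Y.comp_zero]
  set N : Submodule G.A Y.M :=
    { carrier := {m : Y.M | ∀ i, c ≤ i → Y.comp m i = 0}
      add_mem' := fun {m} {n} hm hn i hi => by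
        rw [Y.comp_add, hm i hi, hn i hi, add_zero]
      zero_mem' := fun i _ => Y.comp_zero i
      smul_mem' := by
        intro x m hm
        have hrw : x • m = ∑ k ∈ asupp x, ∑ d ∈ Y.supp_s8 m, acomp x k • Y.comp m d := by
          rw [smul_comp_eq m x]
          refine Finset.sum_congr rfl fun k _ => ?_
          conv_lhs => rw [Y.sum_comp m, Finset.smul_sum]
        rw [hrw]
        apply Finset.sum_induction _ (· ∈ {m' : Y.M | ∀ i, c ≤ i → Y.comp m' i = 0})
        · intro a' b' ha' hb' i hi
          rw [Y.comp_add, ha' i hi, hb' i hi, add_zero]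
        · intro i _
          exact Y.comp_zero i
        · intro k _
          apply Finset.sum_induction _ (· ∈ {m' : Y.M | ∀ i, c ≤ i → Y.comp m' i = 0})
          · intro a' b' ha' hb' i hi
            rw [Y.comp_add, ha' i hi, hb' i hi, add_zero]
          · intro i _
            exact Y.comp_zero i
          · intro d _
            exact memP m hm x k d } with hN
  have hNgr : IsGradedSub Y N := by
    intro m hm
    refine ⟨Y.supp_s8 m, fun i => Y.comp m i, fun i => Y.comp_mem m i, fun i => ?_, Y.sum_comp m⟩
    show Y.comp m i ∈ N
    intro i' hi'
    rcases eq_or_ne (Y.comp m i) 0 with h | h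
    · rw [h, Y.comp_zero]
    have : i < c := by
      by_contra hcon
      exact h (hm i (by omega))
    rcases Y.comp_homog (Y.comp_mem m i) with ⟨h1, h2⟩
    rcases eq_or_ne i' i with rfl | hne
    · rw [h1]; exact hm i' (by omega)
    · rw [h2 i' hne]
  rcases hs.2 N hNgr with h | h
  · obtain ⟨ma, hma, hma0⟩ := Y.exists_ne_zero_of_ne_bot ha
    have hane : a ≠ c := fun h => hc (h ▸ ha)
    have : ma ∈ N := by
      intro i hi
      rcases Y.comp_homog hma with ⟨h1, h2⟩
      exact h2 i (by omega)
    rw [h, Submodule.mem_bot] at this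
    exact hma0 this
  · obtain ⟨mb, hmb, hmb0⟩ := Y.exists_ne_zero_of_ne_bot hb
    have hmbN : mb ∈ N := by rw [h]; trivial
    have := hmbN b (by omega)
    rw [(Y.comp_homog hmb).1] at this
    exact hmb0 this

-- ### scalar commutation

lemma alg_smul_comm {Y : GradedMod G} (c : ℂ) (a : G.A) (m : Y.M) :
    a • (algebraMap ℂ G.A c • m) = algebraMap ℂ G.A c • (a • m) := by
  rw [smul_smul, smul_smul, Algebra.commutes]

-- ### The bundled context for the key construction

lemma d_zero_of {n : ℤ} (hn : 1 ≤ n) {d : G.A} (hd : d ∈ G.deg (n - 1))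
    (h : d * G.tp = 0) : d = 0 := by
  refine tp_right_cancel (n := (n - 1).toNat)
    (deg_cast hd (show n - 1 = (((n-1).toNat : ℕ) : ℤ) by omega)) (zero_mem _) ?_
  rw [h, zero_mul]

structure KeyCtx (G : GWA R σ v) (S T : GradedMod G) : Type where
  chi : R → ℂ
  b : ℤ
  sb : S.M
  z : T.M
  hsb : sb ∈ S.deg b
  hsb0 : sb ≠ 0
  hz : z ∈ T.deg (b + 1)
  hz0 : z ≠ 0
  hSgap : S.deg (b + 1) = ⊥
  hTlow : ∀ j : ℤ, j ≤ b → T.deg j = ⊥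
  actS : ∀ {m : S.M} {i : ℤ}, m ∈ S.deg i → ∀ u : R,
    G.emb u • m = algebraMap ℂ G.A (chi ((σ ^ i) u)) • m
  actT : ∀ {m : T.M} {i : ℤ}, m ∈ T.deg i → ∀ u : R,
    G.emb u • m = algebraMap ℂ G.A (chi ((σ ^ i) u)) • m
  cycS : ∀ m : S.M, ∃ a : G.A, a • sb = m
  cycT : ∀ m : T.M, ∃ a : G.A, a • z = m

namespace KeyCtx

variable {S T : GradedMod G} (K : KeyCtx G S T)

lemma tp_smul_sb : G.tp • K.sb = 0 := by
  have h := S.smul_mem G.tp_mem K.hsb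
  rw [add_comm, K.hSgap] at h
  simpa using h


/-- The membership predicate of the graded left ideal `J`. -/
def P (a : G.A) : Prop :=
  a • K.sb = 0 ∧ ∀ n : ℤ, 1 ≤ n → ∀ d ∈ G.deg (n - 1), d * G.tp = acomp a n → d • K.z = 0

lemma P_zero : K.P 0 := by
  constructor
  · rw [zero_smul]
  · intro n hn d hd hdtp
    rw [acomp_zero] at hdtp
    rw [d_zero_of hn hd hdtp, zero_smul]

lemma P_add {a a' : G.A} (ha : K.P a) (ha' : K.P a') : K.P (a + a') := by
  constructor
  · rw [add_smul, ha.1, ha'.1, add_zero]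
  · intro n hn d hd hdtp
    rw [acomp_add] at hdtp
    -- split d into the two canonical pieces
    obtain ⟨r1, hr1, -⟩ := G.free_pos n.toNat (acomp a n)
      (deg_cast (acomp_mem a n) (show n = ((n.toNat : ℕ) : ℤ) by omega))
    obtain ⟨r2, hr2, -⟩ := G.free_pos n.toNat (acomp a' n)
      (deg_cast (acomp_mem a' n) (show n = ((n.toNat : ℕ) : ℤ) by omega))
    have hnt : n.toNat = (n - 1).toNat + 1 := by omega
    set d1 : G.A := G.emb r1 * G.tp ^ (n - 1).toNat with hd1
    set d2 : G.A := G.emb r2 * G.tp ^ (n - 1).toNat with hd2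
    have hd1m : d1 ∈ G.deg (n - 1) :=
      deg_cast (G.mul_mem (G.emb_mem r1) (tp_pow_mem ((n - 1).toNat)))
        (show (0 : ℤ) + (((n - 1).toNat : ℕ) : ℤ) = n - 1 by omega)
    have hd2m : d2 ∈ G.deg (n - 1) :=
      deg_cast (G.mul_mem (G.emb_mem r2) (tp_pow_mem ((n - 1).toNat)))
        (show (0 : ℤ) + (((n - 1).toNat : ℕ) : ℤ) = n - 1 by omega)
    have hd1tp : d1 * G.tp = acomp a n := by
      rw [hd1, mul_assoc, ← pow_succ, ← hnt, ← hr1]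
    have hd2tp : d2 * G.tp = acomp a' n := by
      rw [hd2, mul_assoc, ← pow_succ, ← hnt, ← hr2]
    have hsplit : d = d1 + d2 := by
      refine tp_right_cancel (n := (n - 1).toNat)
        (deg_cast hd (show n - 1 = (((n - 1).toNat : ℕ) : ℤ) by omega))
        (deg_cast (add_mem hd1m hd2m) (show n - 1 = (((n - 1).toNat : ℕ) : ℤ) by omega)) ?_
      rw [add_mul, hd1tp, hd2tp, hdtp]
    rw [hsplit, add_smul, ha.2 n hn d1 hd1m hd1tp, ha'.2 n hn d2 hd2m hd2tp, add_zero]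

lemma P_comp {a : G.A} (ha : K.P a) (n : ℤ) : K.P (acomp a n) := by
  constructor
  · exact smul_homog_comps K.hsb ha.1 n
  · intro n' hn' d hd hdtp
    rcases eq_or_ne n' n with rfl | hne
    · rw [(acomp_homog (acomp_mem a n')).1] at hdtp
      exact ha.2 n' hn' d hd hdtp
    · rw [(acomp_homog (acomp_mem a n)).2 n' hne] at hdtp
      rw [d_zero_of hn' hd hdtp, zero_smul]

/-- Core closure lemma: a homogeneous multiple of a homogeneous element of the ideal
is again in the ideal. -/
lemma P_core {j k : ℤ} {x c : G.A} (hx : x ∈ G.deg j) (hc : c ∈ G.deg k)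
    (h1 : c • K.sb = 0)
    (h2 : 1 ≤ k → ∀ d ∈ G.deg (k - 1), d * G.tp = c → d • K.z = 0) :
    K.P (x * c) := by
  have hxc : x * c ∈ G.deg (j + k) := G.mul_mem hx hc
  have hcomp := acomp_homog hxc
  constructor
  · -- (x*c) • sb = 0
    rcases le_or_gt 1 k with hk | hk
    · -- c = d₀ * tp and tp kills sb
      obtain ⟨r, hr, -⟩ := G.free_pos k.toNat c
        (deg_cast hc (show k = ((k.toNat : ℕ) : ℤ) by omega))
      have hkt : k.toNat = (k - 1).toNat + 1 := by omega
      have hc' : c = (G.emb r * G.tp ^ (k - 1).toNat) * G.tp := by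
        rw [mul_assoc, ← pow_succ, ← hkt, hr]
      rw [hc', ← mul_assoc, mul_smul, mul_smul, K.tp_smul_sb, smul_zero, smul_zero]
    · rw [mul_smul, h1, smul_zero]
  · intro n hn d hd hdtp
    rcases eq_or_ne n (j + k) with rfl | hne
    swap
    · rw [hcomp.2 n hne] at hdtp
      rw [d_zero_of hn hd hdtp, zero_smul]
    rw [hcomp.1] at hdtp
    rcases le_or_gt 1 k with hk | hk
    · -- easy case: c itself is a multiple of tp
      obtain ⟨r, hr, -⟩ := G.free_pos k.toNat c
        (deg_cast hc (show k = ((k.toNat : ℕ) : ℤ) by omega))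
      have hkt : k.toNat = (k - 1).toNat + 1 := by omega
      set d0 : G.A := G.emb r * G.tp ^ (k - 1).toNat with hd0
      have hd0m : d0 ∈ G.deg (k - 1) :=
        deg_cast (G.mul_mem (G.emb_mem r) (tp_pow_mem ((k - 1).toNat)))
          (show (0 : ℤ) + (((k - 1).toNat : ℕ) : ℤ) = k - 1 by omega)
      have hd0tp : d0 * G.tp = c := by
        rw [hd0, mul_assoc, ← pow_succ, ← hkt, ← hr]
      have hdz : d0 • K.z = 0 := h2 hk d0 hd0m hd0tp
      have hdd : d = x * d0 := by
        refine tp_right_cancel (n := (j + k - 1).toNat)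
          (deg_cast hd (show j + k - 1 = (((j + k - 1).toNat : ℕ) : ℤ) by omega))
          (deg_cast (G.mul_mem hx hd0m)
            (show j + (k - 1) = (((j + k - 1).toNat : ℕ) : ℤ) by omega)) ?_
        rw [hdtp, mul_assoc, hd0tp]
      rw [hdd, mul_smul, hdz, smul_zero]
    · -- hard case: k ≤ 0 < j + k
      have hk0 : k ≤ 0 := by omega
      have hj1 : 1 ≤ j := by omega
      set p : ℕ := j.toNat with hp
      set q : ℕ := (-k).toNat with hq
      have hpq1 : q + 1 ≤ p := by omega
      set pq : ℕ := p - q with hpq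
      have hpq0 : 1 ≤ pq := by omega
      obtain ⟨u, hu, -⟩ := G.free_pos p x
        (deg_cast hx (show j = ((p : ℕ) : ℤ) by omega))
      obtain ⟨w, hw, -⟩ := G.free_neg q c
        (deg_cast hc (show k = -((q : ℕ) : ℤ) by omega))
      -- rewrite the product in normal form
      have hppow : G.tp ^ p = G.tp ^ pq * G.tp ^ q := by
        rw [← pow_add]
        congr 1
        omega
      have hprod : x * c = (G.emb u * G.emb ((σ.symm ^ p) w)
          * G.emb ((σ.symm ^ pq) (Vv σ v q))) * G.tp ^ pq := by
        rw [hu, hw]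
        calc G.emb u * G.tp ^ p * (G.emb w * G.tm ^ q)
            = G.emb u * ((G.tp ^ p * G.emb w) * G.tm ^ q) := by
              rw [mul_assoc, mul_assoc]
          _ = G.emb u * (G.emb ((σ.symm ^ p) w) * (G.tp ^ p * G.tm ^ q)) := by
              rw [tp_pow_emb, mul_assoc]
          _ = G.emb u * (G.emb ((σ.symm ^ p) w) * (G.tp ^ pq * (G.tp ^ q * G.tm ^ q))) := by
              rw [hppow, mul_assoc]
          _ = G.emb u * (G.emb ((σ.symm ^ p) w)
                * (G.emb ((σ.symm ^ pq) (Vv σ v q)) * G.tp ^ pq)) := by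
              rw [tp_pow_tm_pow, tp_pow_emb]
          _ = _ := by simp only [mul_assoc]
      set BIG : G.A := G.emb u * G.emb ((σ.symm ^ p) w) * G.emb ((σ.symm ^ pq) (Vv σ v q))
        with hBIG
      have hBIGm : BIG ∈ G.deg 0 := by
        have h1m := G.mul_mem (G.mul_mem (G.emb_mem u) (G.emb_mem ((σ.symm ^ p) w)))
          (G.emb_mem ((σ.symm ^ pq) (Vv σ v q)))
        simpa only [zero_add] using h1m
      have hdd : d = BIG * G.tp ^ (pq - 1) := by
        refine tp_right_cancel (n := (pq - 1))
          (deg_cast hd (show j + k - 1 = (((pq - 1 : ℕ) : ℕ) : ℤ) by omega))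
          (deg_cast (G.mul_mem hBIGm (tp_pow_mem (pq - 1)))
            (show (0 : ℤ) + (((pq - 1 : ℕ) : ℕ) : ℤ) = ((pq - 1 : ℕ) : ℤ) by omega)) ?_
        have hstep : BIG * G.tp ^ (pq - 1) * G.tp = BIG * G.tp ^ pq := by
          rw [mul_assoc, ← pow_succ]
          congr 2
          omega
        rw [hdtp, hprod, hstep]
      -- now evaluate d • z
      set ξ : T.M := G.tp ^ (pq - 1) • K.z with hξ
      have hξm : ξ ∈ T.deg (((pq - 1 : ℕ) : ℤ) + (K.b + 1)) :=
        T.smul_mem (tp_pow_mem (pq - 1)) K.hz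
      have hξm' : ξ ∈ T.deg (K.b + (j + k)) := by
        have : ((pq - 1 : ℕ) : ℤ) + (K.b + 1) = K.b + (j + k) := by omega
        rwa [this] at hξm
      -- dichotomy from h1
      have hξ0 : G.emb w • (G.tm ^ q • K.sb) = 0 := by
        have := h1
        rw [hw, mul_smul] at this
        exact this
      have hξ0m : G.tm ^ q • K.sb ∈ S.deg (K.b + k) := by
        have := S.smul_mem (tm_pow_mem q) K.hsb
        have he : -((q : ℕ) : ℤ) + K.b = K.b + k := by omega
        rwa [he] at this
      have hchiw : algebraMap ℂ G.A (K.chi ((σ ^ (K.b + k)) w)) • (G.tm ^ q • K.sb) = 0 := by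
        rw [← K.actS hξ0m w]
        exact hξ0
      have hzero : d • K.z = 0 := by
        rw [hdd, mul_smul, ← hξ]
        rw [hBIG, mul_smul, mul_smul]
        have hinner : G.emb ((σ.symm ^ pq) (Vv σ v q)) • ξ
            = algebraMap ℂ G.A (K.chi ((σ ^ K.b) (Vv σ v q))) • ξ := by
          rw [K.actT hξm' ((σ.symm ^ pq) (Vv σ v q)), sigma_zpow_comp]
          have he : K.b + (j + k) - ((pq : ℕ) : ℤ) = K.b := by omega
          rw [he]
        have hmid : ∀ m : T.M, m ∈ T.deg (K.b + (j + k)) → G.emb ((σ.symm ^ p) w) • m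
            = algebraMap ℂ G.A (K.chi ((σ ^ (K.b + k)) w)) • m := by
          intro m hm
          rw [K.actT hm ((σ.symm ^ p) w), sigma_zpow_comp]
          have he : K.b + (j + k) - ((p : ℕ) : ℤ) = K.b + k := by omega
          rw [he]
        by_cases hcw : K.chi ((σ ^ (K.b + k)) w) = 0
        · rw [hinner, alg_smul_comm]
          rw [hmid ξ hξm', hcw, map_zero, zero_smul, smul_zero, smul_zero]
        · -- then tm^q • sb = 0 and the V-scalar vanishes
          have hsb0' : G.tm ^ q • K.sb = 0 := alg_smul_cancel hchiw hcw
          have hV : G.emb (Vv σ v q) • K.sb = 0 := by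
            rw [← tp_pow_tm_pow, mul_smul, hsb0', smul_zero]
          have hV2 : algebraMap ℂ G.A (K.chi ((σ ^ K.b) (Vv σ v q))) • K.sb = 0 := by
            rw [← K.actS K.hsb (Vv σ v q)]
            exact hV
          have hVc : K.chi ((σ ^ K.b) (Vv σ v q)) = 0 := alg_smul_eq_zero hV2 K.hsb0
          rw [hinner, hVc, map_zero, zero_smul, smul_zero, smul_zero]
      exact hzero

lemma P_smul {a : G.A} (ha : K.P a) (x : G.A) : K.P (x * a) := by
  have hstep : ∀ n : ℤ, K.P (x * acomp a n) := by
    intro n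
    have hPn := K.P_comp ha n
    have hrw : x * acomp a n = ∑ i ∈ asupp x, acomp x i * acomp a n := by
      conv_lhs => rw [sum_acomp x]
      rw [Finset.sum_mul]
    rw [hrw]
    apply Finset.sum_induction _ K.P (fun _ _ => K.P_add) K.P_zero
    intro i _
    refine K.P_core (acomp_mem x i) (acomp_mem a n) hPn.1 ?_
    intro hn d hd hdtp
    refine hPn.2 n hn d hd ?_
    rw [hdtp, (acomp_homog (acomp_mem a n)).1]
  have hrw : x * a = ∑ n ∈ asupp a, x * acomp a n := by
    conv_lhs => rw [sum_acomp a]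
    rw [Finset.mul_sum]
  rw [hrw]
  exact Finset.sum_induction _ K.P (fun _ _ => K.P_add) K.P_zero fun n _ => hstep n

/-- The graded left ideal `J`. -/
def J : Submodule G.A G.A where
  carrier := {a : G.A | K.P a}
  add_mem' := fun ha hb => K.P_add ha hb
  zero_mem' := K.P_zero
  smul_mem' := fun x a ha => by
    simpa [smul_eq_mul] using K.P_smul ha x

lemma mem_J {a : G.A} : a ∈ K.J ↔ K.P a := Iff.rfl

end KeyCtx

lemma acomp_mul_tp (a : G.A) (n : ℤ) : acomp (a * G.tp) n = acomp a (n - 1) * G.tp := by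
  classical
  have hg : ∀ i : ℤ, acomp a (i - 1) * G.tp ∈ G.deg i :=
    fun i => deg_cast (G.mul_mem (acomp_mem a (i - 1)) G.tp_mem) (by omega)
  have hsum : a * G.tp = ∑ i ∈ (asupp a).image (· + 1), acomp a (i - 1) * G.tp := by
    rw [Finset.sum_image (by intro x _ y _ h; beta_reduce at h; omega)]
    conv_lhs => rw [sum_acomp a]
    rw [Finset.sum_mul]
    exact Finset.sum_congr rfl fun m _ => by rw [add_sub_cancel_right]
  rw [acomp_eq hg hsum n]
  split_ifs with hmem
  · rfl
  · have hns : n - 1 ∉ asupp a := by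
      intro hcon
      exact hmem (Finset.mem_image.mpr ⟨n - 1, hcon, by omega⟩)
    rw [acomp_not_supp hns, zero_mul]

namespace KeyCtx

variable {S T : GradedMod G} (K : KeyCtx G S T)

/-- The extension module `E = A/J`, graded with `E_i` the image of `A_{i-b}`. -/
noncomputable def Emod : GradedMod G where
  M := G.A ⧸ K.J
  deg i := AddSubgroup.map (K.J.mkQ).toAddMonoidHom (G.deg (i - K.b))
  smul_mem := by
    intro i j a m ha hm
    rw [AddSubgroup.mem_map] at hm ⊢
    obtain ⟨c, hc, rfl⟩ := hm
    refine ⟨a * c, deg_cast (G.mul_mem ha hc) (by omega), ?_⟩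
    show K.J.mkQ (a * c) = a • K.J.mkQ c
    rw [← smul_eq_mul, map_smul]
  decomp := by
    intro m
    obtain ⟨c, rfl⟩ := K.J.mkQ_surjective m
    refine ⟨(asupp c).image (· + K.b), fun i => K.J.mkQ (acomp c (i - K.b)), fun i => ?_, ?_⟩
    · rw [AddSubgroup.mem_map]
      exact ⟨acomp c (i - K.b), acomp_mem c (i - K.b), rfl⟩
    · rw [Finset.sum_image (by intro x _ y _ h; beta_reduce at h; omega)]
      conv_lhs => rw [sum_acomp c]
      rw [map_sum]
      exact Finset.sum_congr rfl fun n _ => by rw [add_sub_cancel_right]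
  indep := by
    intro s g hg hsum i hi
    have hch : ∀ i' : ℤ, ∃ c : G.A, (i' ∈ s → c ∈ G.deg (i' - K.b) ∧ K.J.mkQ c = g i')
        ∧ (i' ∉ s → c = 0) := by
      intro i'
      by_cases hms : i' ∈ s
      · obtain ⟨c, hc, hceq⟩ := AddSubgroup.mem_map.mp (hg i')
        exact ⟨c, fun _ => ⟨hc, hceq⟩, fun h => absurd hms h⟩
      · exact ⟨0, fun h => absurd h hms, fun _ => rfl⟩
    choose cf hcf1 hcf2 using hch
    have hcmem : ∀ i' : ℤ, cf i' ∈ G.deg (i' - K.b) := by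
      intro i'
      by_cases hms : i' ∈ s
      · exact (hcf1 i' hms).1
      · rw [hcf2 i' hms]; exact zero_mem _
    have hsum2 : (∑ i' ∈ s, cf i') ∈ K.J := by
      have : K.J.mkQ (∑ i' ∈ s, cf i') = 0 := by
        rw [map_sum, ← hsum]
        exact Finset.sum_congr rfl fun i' hi' => (hcf1 i' hi').2
      rwa [Submodule.mkQ_apply, Submodule.Quotient.mk_eq_zero] at this
    -- each component of the sum is in J since J is graded
    have hrepr : ∑ i' ∈ s, cf i' = ∑ n ∈ s.image (· - K.b), cf (n + K.b) := by
      rw [Finset.sum_image (by intro x _ y _ h; beta_reduce at h; omega)]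
      exact Finset.sum_congr rfl fun i' _ => by rw [sub_add_cancel]
    have hcomp : acomp (∑ i' ∈ s, cf i') (i - K.b) = cf i := by
      have hgm : ∀ n : ℤ, cf (n + K.b) ∈ G.deg n :=
        fun n => deg_cast (hcmem (n + K.b)) (by omega)
      rw [acomp_eq hgm hrepr (i - K.b), if_pos (Finset.mem_image_of_mem _ hi)]
      congr 1
      omega
    have : acomp (∑ i' ∈ s, cf i') (i - K.b) ∈ K.J := K.P_comp hsum2 (i - K.b)
    rw [hcomp] at this
    have : K.J.mkQ (cf i) = 0 := by rwa [Submodule.mkQ_apply, Submodule.Quotient.mk_eq_zero]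
    rw [← (hcf1 i hi).2, this]

lemma mem_Edeg {m : (K.Emod).M} {i : ℤ} :
    m ∈ (K.Emod).deg i ↔ ∃ c ∈ G.deg (i - K.b), K.J.mkQ c = m := by
  exact AddSubgroup.mem_map

/-- auxiliary linear map `A → S`, `a ↦ a • sb` -/
def gaux : G.A →ₗ[G.A] S.M where
  toFun := fun a => a • K.sb
  map_add' := fun a b => add_smul a b K.sb
  map_smul' := fun r a => mul_smul r a K.sb

@[simp] lemma gaux_apply (a : G.A) : K.gaux a = a • K.sb := rfl

/-- The projection `E → S`. -/
noncomputable def gmap : GHom K.Emod S 0 where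
  toLin := K.J.liftQ K.gaux (fun a ha => LinearMap.mem_ker.mpr ha.1)
  map_deg := by
    intro i m hm
    obtain ⟨c, hc, rfl⟩ := K.mem_Edeg.mp hm
    have h2 : c • K.sb ∈ S.deg ((i - K.b) + K.b) := S.smul_mem hc K.hsb
    have he : (i - K.b) + K.b = i + 0 := by omega
    exact he ▸ h2

lemma gmap_mk (c : G.A) : K.gmap.toLin (K.J.mkQ c) = c • K.sb := rfl

lemma gmap_surj : Function.Surjective K.gmap.toLin := by
  intro m
  obtain ⟨a, ha⟩ := K.cycS m
  exact ⟨K.J.mkQ a, by rw [K.gmap_mk, ha]⟩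

lemma wd {a a' : G.A} (h : a • K.z = a' • K.z) :
    K.J.mkQ (a * G.tp) = K.J.mkQ (a' * G.tp) := by
  have hsub : (a - a') • K.z = 0 := by rw [sub_smul, h, sub_self]
  have hJ : (a - a') * G.tp ∈ K.J := by
    constructor
    · rw [mul_smul, K.tp_smul_sb, smul_zero]
    · intro n hn d hd hdtp
      rw [acomp_mul_tp] at hdtp
      have hdm : d = acomp (a - a') (n - 1) := by
        refine tp_right_cancel (n := (n - 1).toNat)
          (deg_cast hd (show n - 1 = (((n - 1).toNat : ℕ) : ℤ) by omega))
          (deg_cast (acomp_mem (a - a') (n - 1))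
            (show n - 1 = (((n - 1).toNat : ℕ) : ℤ) by omega)) hdtp
      rw [hdm]
      exact smul_homog_comps K.hz hsub (n - 1)
  have : K.J.mkQ ((a - a') * G.tp) = 0 := by
    rwa [Submodule.mkQ_apply, Submodule.Quotient.mk_eq_zero]
  rw [sub_mul, map_sub] at this
  exact sub_eq_zero.mp this

/-- raw function underlying the inclusion `T → E` -/
noncomputable def fraw (t : T.M) : (K.Emod).M := K.J.mkQ ((K.cycT t).choose * G.tp)

lemma fraw_eq {a : G.A} {t : T.M} (h : a • K.z = t) : K.fraw t = K.J.mkQ (a * G.tp) :=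
  K.wd ((K.cycT t).choose_spec.trans h.symm)

/-- The inclusion `T → E`, `a • z ↦ [a * tp]`. -/
noncomputable def fmap : GHom T K.Emod 0 where
  toLin :=
    { toFun := K.fraw
      map_add' := fun t t' => by
        obtain ⟨a, ha⟩ := K.cycT t
        obtain ⟨a', ha'⟩ := K.cycT t'
        have h3 : (a + a') • K.z = t + t' := by rw [add_smul, ha, ha']
        rw [K.fraw_eq ha, K.fraw_eq ha', K.fraw_eq h3, add_mul, map_add]
        rfl
      map_smul' := fun r t => by
        obtain ⟨a, ha⟩ := K.cycT t
        have h3 : (r * a) • K.z = r • t := by rw [mul_smul, ha]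
        show K.fraw (r • t) = r • K.fraw t
        rw [K.fraw_eq ha, K.fraw_eq h3, mul_assoc]
        exact LinearMap.map_smul K.J.mkQ r (a * G.tp) }
  map_deg := by
    intro i t ht
    obtain ⟨a, ha⟩ := K.cycT t
    have hmem : a • K.z ∈ T.deg i := ha ▸ ht
    have heq2 : acomp a (i - (K.b + 1)) • K.z = t := by
      rw [← smul_homog_eq K.hz hmem, ha]
    show K.fraw t ∈ (K.Emod).deg (i + 0)
    rw [K.fraw_eq heq2]
    refine K.mem_Edeg.mpr ⟨acomp a (i - (K.b + 1)) * G.tp,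
      deg_cast (G.mul_mem (acomp_mem a (i - (K.b + 1))) G.tp_mem) (by omega), rfl⟩

lemma fmap_apply (a : G.A) : K.fmap.toLin (a • K.z) = K.J.mkQ (a * G.tp) :=
  K.fraw_eq rfl

lemma fmap_inj : Function.Injective K.fmap.toLin := by
  rw [injective_iff_map_eq_zero]
  intro t ht
  obtain ⟨a, ha⟩ := K.cycT t
  have hJ : a * G.tp ∈ K.J := by
    have h0 : K.J.mkQ (a * G.tp) = 0 := by rw [← K.fmap_apply, ha]; exact ht
    rwa [Submodule.mkQ_apply, Submodule.Quotient.mk_eq_zero] at h0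
  have hcomp : ∀ n : ℤ, acomp a n • K.z = 0 := by
    intro n
    rcases le_or_gt 0 n with hn | hn
    · refine hJ.2 (n + 1) (by omega) (acomp a n)
        (deg_cast (acomp_mem a n) (show n = n + 1 - 1 by omega)) ?_
      rw [acomp_mul_tp]
      congr 2
      omega
    · have hmem : acomp a n • K.z ∈ T.deg (n + (K.b + 1)) :=
        T.smul_mem (acomp_mem a n) K.hz
      have hbot : T.deg (n + (K.b + 1)) = ⊥ := K.hTlow _ (by omega)
      rw [hbot] at hmem
      simpa using hmem
  rw [← ha, smul_comp_eq]
  exact Finset.sum_eq_zero fun n _ => hcomp n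

lemma fg_exact : Function.Exact K.fmap.toLin K.gmap.toLin := by
  rw [LinearMap.exact_iff]
  ext m
  simp only [LinearMap.mem_ker, LinearMap.mem_range]
  constructor
  · intro hm
    obtain ⟨c, rfl⟩ := K.J.mkQ_surjective m
    rw [K.gmap_mk] at hm
    have hterm : ∀ n ∈ asupp c, ∃ y, K.fmap.toLin y = K.J.mkQ (acomp c n) := by
      intro n _
      rcases le_or_gt 1 n with hn | hn
      · obtain ⟨r, hr, -⟩ := G.free_pos n.toNat (acomp c n)
          (deg_cast (acomp_mem c n) (show n = ((n.toNat : ℕ) : ℤ) by omega))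
        have hnt : n.toNat = (n - 1).toNat + 1 := by omega
        have hsplit : acomp c n = (G.emb r * G.tp ^ (n - 1).toNat) * G.tp := by
          rw [mul_assoc, ← pow_succ, ← hnt, ← hr]
        refine ⟨(G.emb r * G.tp ^ (n - 1).toNat) • K.z, ?_⟩
        rw [K.fmap_apply, hsplit]
      · have hJn : acomp c n ∈ K.J := by
          constructor
          · exact smul_homog_comps K.hsb hm n
          · intro n' hn' d hd hdtp
            rw [(acomp_homog (acomp_mem c n)).2 n' (by omega)] at hdtp
            rw [d_zero_of hn' hd hdtp, zero_smul]
        refine ⟨0, ?_⟩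
        rw [map_zero]
        have h0 : K.J.mkQ (acomp c n) = 0 := by
          rwa [Submodule.mkQ_apply, Submodule.Quotient.mk_eq_zero]
        rw [h0]
        rfl
    have hsum : K.J.mkQ c = ∑ n ∈ asupp c, K.J.mkQ (acomp c n) := by
      conv_lhs => rw [sum_acomp c]
      rw [map_sum]
    rw [hsum]
    exact Submodule.sum_mem _ fun n hn => LinearMap.mem_range.mpr (hterm n hn)
  · rintro ⟨t, rfl⟩
    obtain ⟨a, ha⟩ := K.cycT t
    rw [← ha, K.fmap_apply, K.gmap_mk, mul_smul, K.tp_smul_sb, smul_zero]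

/-- The graded extension `0 → T → E → S → 0`. -/
noncomputable def theExt : GExt1 S T where
  E := K.Emod
  f := K.fmap
  g := K.gmap
  inj := K.fmap_inj
  exact := K.fg_exact
  surj := K.gmap_surj

theorem ext_not_split : ¬ K.theExt.Split := by
  rintro ⟨sec, hsec⟩
  have husb := sec.map_deg K.b K.sb K.hsb
  have hmem : sec.toLin K.sb ∈ (K.Emod).deg K.b := by
    have he : K.b + 0 = K.b := by omega
    exact he ▸ husb
  obtain ⟨c, hc, hceq⟩ := K.mem_Edeg.mp hmem
  have hc0 : c ∈ G.deg ((0 : ℕ) : ℤ) := deg_cast hc (by omega)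
  obtain ⟨r, hr, -⟩ := G.free_pos 0 c hc0
  rw [pow_zero, mul_one] at hr
  have hgs : K.gmap.toLin (sec.toLin K.sb) = K.sb := by
    have := congrArg (fun φ => φ K.sb) hsec
    have h' : K.theExt.g.toLin (sec.toLin K.sb) = K.sb := by simpa using this
    exact h'
  have hact : G.emb r • K.sb = algebraMap ℂ G.A (K.chi ((σ ^ K.b) r)) • K.sb :=
    K.actS K.hsb r
  have hval : algebraMap ℂ G.A (K.chi ((σ ^ K.b) r)) • K.sb = K.sb := by
    rw [← hact, ← hr, ← K.gmap_mk c, hceq, hgs]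
  have htp0 : G.tp • sec.toLin K.sb = 0 := by
    rw [← map_smul, K.tp_smul_sb, map_zero]
  have htpc : K.J.mkQ (G.tp * c) = 0 := by
    have hh : G.tp • K.J.mkQ c = K.J.mkQ (G.tp * c) := by
      rw [← smul_eq_mul, map_smul]
    rw [← hh, hceq]
    exact htp0
  have hswap : G.tp * c = G.emb (σ.symm r) * G.tp := by
    rw [hr]
    have h1 := G.rel1 (σ.symm r)
    rw [AlgEquiv.apply_symm_apply] at h1
    exact h1.symm
  have hJJ : G.emb (σ.symm r) * G.tp ∈ K.J := by
    rw [← hswap]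
    have h2 := htpc
    rwa [Submodule.mkQ_apply, Submodule.Quotient.mk_eq_zero] at h2
  have hz0 : G.emb (σ.symm r) • K.z = 0 := by
    refine hJJ.2 1 le_rfl (G.emb (σ.symm r)) (by simpa using G.emb_mem (σ.symm r)) ?_
    rw [(acomp_homog (deg_cast (G.mul_mem (G.emb_mem (σ.symm r)) G.tp_mem) (by omega))).1]
  have hzval : algebraMap ℂ G.A (K.chi ((σ ^ (K.b + 1)) (σ.symm r))) • K.z = 0 := by
    rw [← K.actT K.hz (σ.symm r)]
    exact hz0
  have hchi0 : K.chi ((σ ^ K.b) r) = 0 := by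
    have hcast : (σ ^ (K.b + 1)) (σ.symm r) = (σ ^ K.b) r := by
      have h1 : σ.symm r = (σ.symm ^ 1) r := by rw [pow_one]
      rw [h1, sigma_zpow_comp]
      congr 2
      omega
    rw [hcast] at hzval
    exact alg_smul_eq_zero hzval K.hz0
  rw [hchi0, map_zero, zero_smul] at hval
  exact K.hsb0 hval.symm

end KeyCtx

theorem KeyCtx.key_main {S T : GradedMod G} (K : KeyCtx G S T) :
    ∃ e : GExt1 S T, ¬ e.Split := ⟨K.theExt, K.ext_not_split⟩

-- ### action of R on components of the standard module and its subquotients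

lemma std_act {lam : Ideal R} {X : GradedMod G} (hX : IsStdMod G lam X)
    {χ : R → ℂ} (hχ1 : ∀ r, r - algebraMap ℂ R (χ r) ∈ lam) :
    ∀ {q : X.M} {i : ℤ}, q ∈ X.deg i → ∀ u : R,
      G.emb u • q = algebraMap ℂ G.A (χ ((σ ^ i) u)) • q := by
  obtain ⟨x, hx0, hspan, hann⟩ := hX
  have hann' : ∀ μ ∈ lam, G.emb μ • x = 0 := fun μ hμ =>
    (hann _).mpr (Submodule.subset_span ⟨μ, hμ, rfl⟩)
  have actx0 : ∀ w : R, G.emb w • x = algebraMap ℂ G.A (χ w) • x := by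
    intro w
    have h1 : G.emb (w - algebraMap ℂ R (χ w)) • x = 0 := hann' _ (hχ1 w)
    rw [map_sub, sub_smul, sub_eq_zero] at h1
    rw [h1, G.emb.commutes]
  intro q i hq u
  have hq' : q ∈ Submodule.span G.A {x} := by rw [hspan]; trivial
  obtain ⟨a, rfl⟩ := Submodule.mem_span_singleton.mp hq'
  have h2 : a • x = acomp a (i - 0) • x := smul_homog_eq hx0 hq
  have hi0 : i - 0 = i := by omega
  rw [hi0] at h2
  rw [h2]
  have hmema : acomp a i ∈ G.deg i := acomp_mem a i
  rcases le_or_gt 0 i with hi | hi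
  · set n : ℕ := i.toNat with hn
    obtain ⟨r, hr, -⟩ := G.free_pos n (acomp a i)
      (deg_cast hmema (show i = ((n : ℕ) : ℤ) by omega))
    rw [hr]
    have hni : ((n : ℕ) : ℤ) = i := by omega
    calc G.emb u • (G.emb r * G.tp ^ n) • x
        = (G.emb u * (G.emb r * G.tp ^ n)) • x := (mul_smul _ _ _).symm
      _ = (G.emb r * (G.emb u * G.tp ^ n)) • x := by
          rw [← mul_assoc, ← mul_assoc, ← map_mul, mul_comm u r, map_mul]
      _ = (G.emb r * (G.tp ^ n * G.emb ((σ ^ n) u))) • x := by rw [emb_tp_pow]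
      _ = G.emb r • (G.tp ^ n • (G.emb ((σ ^ n) u) • x)) := by
          rw [mul_smul, mul_smul]
      _ = G.emb r • (G.tp ^ n • (algebraMap ℂ G.A (χ ((σ ^ n) u)) • x)) := by rw [actx0]
      _ = algebraMap ℂ G.A (χ ((σ ^ n) u)) • (G.emb r • (G.tp ^ n • x)) := by
          rw [alg_smul_comm, alg_smul_comm]
      _ = algebraMap ℂ G.A (χ ((σ ^ i) u)) • (G.emb r * G.tp ^ n) • x := by
          rw [mul_smul, sigma_npow_zpow, hni]
  · set n : ℕ := (-i).toNat with hn
    obtain ⟨r, hr, -⟩ := G.free_neg n (acomp a i)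
      (deg_cast hmema (show i = -((n : ℕ) : ℤ) by omega))
    rw [hr]
    have hni : -((n : ℕ) : ℤ) = i := by omega
    calc G.emb u • (G.emb r * G.tm ^ n) • x
        = (G.emb u * (G.emb r * G.tm ^ n)) • x := (mul_smul _ _ _).symm
      _ = (G.emb r * (G.emb u * G.tm ^ n)) • x := by
          rw [← mul_assoc, ← mul_assoc, ← map_mul, mul_comm u r, map_mul]
      _ = (G.emb r * (G.tm ^ n * G.emb ((σ.symm ^ n) u))) • x := by rw [emb_tm_pow]
      _ = G.emb r • (G.tm ^ n • (G.emb ((σ.symm ^ n) u) • x)) := by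
          rw [mul_smul, mul_smul]
      _ = G.emb r • (G.tm ^ n • (algebraMap ℂ G.A (χ ((σ.symm ^ n) u)) • x)) := by rw [actx0]
      _ = algebraMap ℂ G.A (χ ((σ.symm ^ n) u)) • (G.emb r • (G.tm ^ n • x)) := by
          rw [alg_smul_comm, alg_smul_comm]
      _ = algebraMap ℂ G.A (χ ((σ ^ i) u)) • (G.emb r * G.tm ^ n) • x := by
          rw [mul_smul, sigma_symm_npow_zpow, hni]

lemma subquot_act {lam : Ideal R} {X Y : GradedMod G} (hX : IsStdMod G lam X)
    {χ : R → ℂ} (hχ1 : ∀ r, r - algebraMap ℂ R (χ r) ∈ lam)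
    (hsub : IsSubquotient X Y) :
    ∀ {m : Y.M} {i : ℤ}, m ∈ Y.deg i → ∀ u : R,
      G.emb u • m = algebraMap ℂ G.A (χ ((σ ^ i) u)) • m := by
  obtain ⟨Q, P, hQ, hP, hPQ, φ, hsurj, hker, hdeg⟩ := hsub
  intro m i hm u
  obtain ⟨q, rfl⟩ := hsurj m
  obtain ⟨s, g, hg1, hg2, hg3⟩ := hQ (q : X.M) q.2
  have hqsum : q = ∑ j ∈ s, (⟨g j, hg2 j⟩ : Q) := by
    apply Subtype.ext
    rw [hg3]
    simp
  have hφsum : φ q = ∑ j ∈ s, φ (⟨g j, hg2 j⟩ : Q) := by rw [hqsum, map_sum]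
  have hterm : ∀ j : ℤ, φ (⟨g j, hg2 j⟩ : Q) ∈ Y.deg j := fun j => hdeg j _ (hg1 j)
  rw [hφsum] at hm ⊢
  have := (Y.sum_mem_deg (fun j => hterm j) hm).2
  rw [this]
  split_ifs with hmem
  · -- the single homogeneous piece
    have hgi : (g i : X.M) ∈ X.deg i := hg1 i
    have hact : G.emb u • g i = algebraMap ℂ G.A (χ ((σ ^ i) u)) • g i :=
      std_act hX hχ1 hgi u
    have hsub1 : G.emb u • (⟨g i, hg2 i⟩ : Q) = algebraMap ℂ G.A (χ ((σ ^ i) u)) • ⟨g i, hg2 i⟩ :=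
      Subtype.ext hact
    rw [← map_smul, hsub1, map_smul]
  · rw [smul_zero, smul_zero]

lemma delta_nonempty {Y : GradedMod G} (hs : IsSimpleGr Y) : ∃ i, i ∈ deltaSet Y := by
  obtain ⟨m, hm⟩ := hs.1
  obtain ⟨s, g, hg1, hg2⟩ := Y.decomp m
  by_contra hc
  push_neg at hc
  have hbot : ∀ i, Y.deg i = ⊥ := by
    intro i
    by_contra h
    exact hc i h
  apply hm
  rw [hg2]
  refine Finset.sum_eq_zero fun i _ => ?_
  have := hg1 i
  rw [hbot i] at this
  simpa using this

theorem oriented_case (hfg : Algebra.FiniteType ℂ R)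
    (lam : Ideal R) (hlam : lam.IsMaximal)
    (X : GradedMod G) (hX : IsStdMod G lam X)
    (S T : GradedMod G)
    (hSsub : IsSubquotient X S) (hSsimp : IsSimpleGr S)
    (hTsub : IsSubquotient X T) (hTsimp : IsSimpleGr T)
    (hadj : IsIntervalZ (deltaSet S ∪ deltaSet T))
    (hori : ∀ s ∈ deltaSet S, ∀ t ∈ deltaSet T, s < t) :
    ∃ e : GExt1 S T, ¬ e.Split := by
  obtain ⟨χ, hχ1, hχ2⟩ := exists_chi hfg lam hlam
  obtain ⟨iS, hiS⟩ := delta_nonempty hSsimp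
  obtain ⟨iT, hiT⟩ := delta_nonempty hTsimp
  -- greatest element of deltaSet S
  obtain ⟨b, hbS, hbmax⟩ := Int.exists_greatest_of_bdd
    (P := fun z => z ∈ deltaSet S) ⟨iT, fun z hz => le_of_lt (hori z hz iT hiT)⟩ ⟨iS, hiS⟩
  have hbT : b + 1 ∈ deltaSet T := by
    have hmem : b + 1 ∈ deltaSet S ∪ deltaSet T := by
      refine hadj iS (Set.mem_union_left _ hiS) iT (Set.mem_union_right _ hiT) (b + 1) ?_ ?_
      · have := hbmax iS hiS; omega
      · have := hori b hbS iT hiT; omega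
    rcases hmem with h | h
    · exfalso
      have := hbmax (b + 1) h
      omega
    · exact h
  have hgap : S.deg (b + 1) = ⊥ := by
    by_contra h
    have := hbmax (b + 1) h
    omega
  have hTlow : ∀ j : ℤ, j ≤ b → T.deg j = ⊥ := by
    intro j hj
    by_contra h
    have := hori b hbS j h
    omega
  obtain ⟨sb, hsb, hsb0⟩ := S.exists_ne_zero_of_ne_bot hbS
  obtain ⟨z, hz, hz0⟩ := T.exists_ne_zero_of_ne_bot hbT
  set K : KeyCtx G S T :=
    { chi := χ
      b := b
      sb := sb
      z := z
      hsb := hsb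
      hsb0 := hsb0
      hz := hz
      hz0 := hz0
      hSgap := hgap
      hTlow := hTlow
      actS := fun hm u => subquot_act hX hχ1 hSsub hm u
      actT := fun hm u => subquot_act hX hχ1 hTsub hm u
      cycS := fun m => simple_cyclic hSsimp hsb hsb0 m
      cycT := fun m => simple_cyclic hTsimp hz hz0 m }
  exact K.key_main

-- ### flipping the grading

def GWA.flip (G : GWA R σ v) : GWA R σ.symm (σ v) where
  A := G.A
  ringA := G.ringA
  algA := G.algA
  emb := G.emb
  tp := G.tm
  tm := G.tp
  rel1 := fun r => by
    have h := G.rel2 (σ.symm r)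
    rwa [AlgEquiv.apply_symm_apply] at h
  rel2 := fun r => by
    have h := G.rel1 (σ.symm r)
    rwa [AlgEquiv.apply_symm_apply] at h
  rel3 := by
    show G.tp * G.tm = G.emb (σ.symm (σ v))
    rw [AlgEquiv.symm_apply_apply]
    exact G.rel4
  rel4 := G.rel3
  deg := fun n => G.deg (-n)
  algmap_mem := fun c => by simpa using G.algmap_mem c
  emb_mem := fun r => by simpa using G.emb_mem r
  tp_mem := G.tm_mem
  tm_mem := by simpa using G.tp_mem
  mul_mem := fun {i j a b} ha hb => by
    have h := G.mul_mem ha hb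
    rwa [show -i + -j = -(i + j) by ring] at h
  decomp := fun a => by
    obtain ⟨s, g, h1, h2⟩ := G.decomp a
    refine ⟨s.image Neg.neg, fun i => g (-i), fun i => h1 (-i), ?_⟩
    rw [Finset.sum_image (by intro x _ y _ h; omega)]
    simpa using h2
  indep := fun s g hg hsum i hi => by
    have h := G.indep (s.image Neg.neg) (fun j => g (-j))
      (fun j => by simpa using hg (-j))
      (by rw [Finset.sum_image (by intro x _ y _ h; omega)]; simpa using hsum)
      (-i) (Finset.mem_image_of_mem _ hi)
    simpa using h
  free_pos := fun n a ha => G.free_neg n a ha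
  free_neg := fun n a ha => G.free_pos n a (by simpa using ha)

def GradedMod.flip {G : GWA R σ v} (X : GradedMod G) : GradedMod G.flip where
  M := X.M
  acg := X.acg
  mod := X.mod
  deg := fun i => X.deg (-i)
  smul_mem := fun {i j a m} ha hm => by
    have h := X.smul_mem (ha : a ∈ G.deg (-i)) hm
    rwa [show -i + -j = -(i + j) by ring] at h
  decomp := fun m => by
    obtain ⟨s, g, h1, h2⟩ := X.decomp m
    refine ⟨s.image Neg.neg, fun i => g (-i), fun i => h1 (-i), ?_⟩
    rw [Finset.sum_image (by intro x _ y _ h; omega)]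
    simpa using h2
  indep := fun s g hg hsum i hi => by
    have h := X.indep (s.image Neg.neg) (fun j => g (-j))
      (fun j => by simpa using hg (-j))
      (by rw [Finset.sum_image (by intro x _ y _ h; omega)]; simpa using hsum)
      (-i) (Finset.mem_image_of_mem _ hi)
    simpa using h

def GradedMod.unflip {G : GWA R σ v} (Z : GradedMod G.flip) : GradedMod G where
  M := Z.M
  acg := Z.acg
  mod := Z.mod
  deg := fun i => Z.deg (-i)
  smul_mem := fun {i j a m} ha hm => by
    have ha' : a ∈ G.flip.deg (-i) := by
      show a ∈ G.deg (- -i)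
      rwa [neg_neg]
    have h := Z.smul_mem ha' hm
    rwa [show -i + -j = -(i + j) by ring] at h
  decomp := fun m => by
    obtain ⟨s, g, h1, h2⟩ := Z.decomp m
    refine ⟨s.image Neg.neg, fun i => g (-i), fun i => h1 (-i), ?_⟩
    rw [Finset.sum_image (by intro x _ y _ h; omega)]
    simpa using h2
  indep := fun s g hg hsum i hi => by
    have h := Z.indep (s.image Neg.neg) (fun j => g (-j))
      (fun j => by simpa using hg (-j))
      (by rw [Finset.sum_image (by intro x _ y _ h; omega)]; simpa using hsum)
      (-i) (Finset.mem_image_of_mem _ hi)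
    simpa using h

lemma IsGradedSub.flip_of {X : GradedMod G} {N : Submodule G.A X.M} (h : IsGradedSub X N) :
    IsGradedSub X.flip N := by
  intro m hm
  obtain ⟨s, g, h1, h2, h3⟩ := h m hm
  exact ⟨s.image Neg.neg, fun i => g (-i), fun i => h1 (-i), fun i => h2 (-i), by
    show (m : X.M) = ∑ i ∈ Finset.image Neg.neg s, g (-i)
    rw [Finset.sum_image (by intro x _ y _ h; omega)]; simp only [neg_neg]; exact h3⟩

lemma IsGradedSub.unflip_of {X : GradedMod G} {N : Submodule G.A X.M}
    (h : IsGradedSub X.flip N) : IsGradedSub X N := by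
  intro m hm
  obtain ⟨s, g, h1, h2, h3⟩ := h m hm
  refine ⟨s.image Neg.neg, fun i => g (-i), fun i => ?_, fun i => h2 (-i), by
    show m = ∑ i ∈ Finset.image Neg.neg s, (g (-i) : X.M)
    rw [Finset.sum_image (by intro x _ y _ h; omega)]; simp only [neg_neg]; exact h3⟩
  have := h1 (-i)
  show g (-i) ∈ X.deg i
  have h4 : g (-i) ∈ X.deg (- -i) := this
  rwa [neg_neg] at h4

lemma IsSimpleGr.flip_of {Y : GradedMod G} (h : IsSimpleGr Y) : IsSimpleGr Y.flip :=
  ⟨h.1, fun N hN => h.2 N hN.unflip_of⟩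

lemma IsStdMod.flip_of {lam : Ideal R} {X : GradedMod G} (h : IsStdMod G lam X) :
    IsStdMod G.flip lam X.flip := by
  obtain ⟨x, hx0, hspan, hann⟩ := h
  refine ⟨x, ?_, hspan, hann⟩
  show x ∈ X.deg (-0)
  rwa [neg_zero]

lemma IsSubquotient.flip_of {X Y : GradedMod G} (h : IsSubquotient X Y) :
    IsSubquotient X.flip Y.flip := by
  obtain ⟨Q, P, hQ, hP, hPQ, φ, hsurj, hker, hdeg⟩ := h
  exact ⟨Q, P, hQ.flip_of, hP.flip_of, hPQ, φ, hsurj, hker, fun i q hq => hdeg (-i) q hq⟩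

lemma deltaSet_flip {Y : GradedMod G} {i : ℤ} : i ∈ deltaSet Y.flip ↔ -i ∈ deltaSet Y :=
  Iff.rfl

/-- transfer an extension of flipped modules back -/
def GExt1.unflip {S T : GradedMod G} (e : GExt1 S.flip T.flip) : GExt1 S T where
  E := e.E.unflip
  f :=
    { toLin := e.f.toLin
      map_deg := fun i m hm => by
        have hm' : m ∈ T.flip.deg (-i) := by
          show m ∈ T.deg (- -i)
          rwa [neg_neg]
        have h := e.f.map_deg (-i) m hm'
        show e.f.toLin m ∈ e.E.deg (-(i + 0))
        rwa [show -(i + 0) = -i + 0 by ring] }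
  g :=
    { toLin := e.g.toLin
      map_deg := fun i m hm => by
        have hm' : m ∈ e.E.deg (-i) := hm
        have h := e.g.map_deg (-i) m hm'
        have h4 : e.g.toLin m ∈ S.deg (-(-i + 0)) := h
        show e.g.toLin m ∈ S.deg (i + 0)
        rwa [show -(-i + 0) = i + 0 by ring] at h4 }
  inj := e.inj
  exact := e.exact
  surj := e.surj

lemma GExt1.unflip_not_split {S T : GradedMod G} (e : GExt1 S.flip T.flip)
    (h : ¬ e.Split) : ¬ e.unflip.Split := by
  rintro ⟨sec, hsec⟩
  refine h ⟨{ toLin := sec.toLin, map_deg := fun i m hm => ?_ }, hsec⟩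
  have hm' : m ∈ S.deg (-i) := hm
  have h2 := sec.map_deg (-i) m hm'
  have h3 : sec.toLin m ∈ e.E.unflip.deg (-i + 0) := h2
  show sec.toLin m ∈ e.E.deg (i + 0)
  have h4 : sec.toLin m ∈ e.E.deg (-(-i + 0)) := h3
  rwa [show -(-i + 0) = i + 0 by ring] at h4

/-- Adjacent simple graded subquotients `S, T` of `A^λ` (distinct, i.e. with
disjoint degree supports, whose union of degree supports is an interval) admit a nonsplit
graded extension, i.e. `Ext¹_gr(S,T) ≠ 0`. -/
theorem stmt8 {R : Type} [CommRing R] [Algebra ℂ R] (hfg : Algebra.FiniteType ℂ R)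
    {σ : R ≃ₐ[ℂ] R} {v : R} (G : GWA R σ v)
    (lam : Ideal R) (hlam : lam.IsMaximal)
    (X : GradedMod G) (hX : IsStdMod G lam X)
    (S T : GradedMod G)
    (hS : IsSubquotient X S ∧ IsSimpleGr S) (hT : IsSubquotient X T ∧ IsSimpleGr T)
    (hdisj : deltaSet S ∩ deltaSet T = ∅)
    (hadj : IsIntervalZ (deltaSet S ∪ deltaSet T)) :
    ∃ e : GExt1 S T, ¬ e.Split := by
  obtain ⟨hSsub, hSsimp⟩ := hS
  obtain ⟨hTsub, hTsimp⟩ := hT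
  have hIS := simple_interval hSsimp
  have hIT := simple_interval hTsimp
  have hdisj' : ∀ i : ℤ, i ∈ deltaSet S → i ∈ deltaSet T → False := fun i h1 h2 => by
    have hmem : i ∈ deltaSet S ∩ deltaSet T := ⟨h1, h2⟩
    rw [hdisj] at hmem
    exact hmem
  by_cases hori : ∀ s ∈ deltaSet S, ∀ t ∈ deltaSet T, s < t
  · exact oriented_case hfg lam hlam X hX S T hSsub hSsimp hTsub hTsimp hadj hori
  · push_neg at hori
    obtain ⟨s₀, hs₀, t₀, ht₀, hle⟩ := hori
    have ht₀s₀ : t₀ < s₀ := lt_of_le_of_ne hle fun h => hdisj' t₀ (h ▸ hs₀) ht₀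
    have hrev : ∀ t ∈ deltaSet T, ∀ s ∈ deltaSet S, t < s := by
      intro t ht s hs
      by_contra hc
      push_neg at hc
      have hst : s < t := lt_of_le_of_ne hc fun h => hdisj' s hs (h ▸ ht)
      rcases le_or_gt s t₀ with h1 | h1
      · exact hdisj' t₀ (hIS s hs s₀ hs₀ t₀ h1 (le_of_lt ht₀s₀)) ht₀
      · exact hdisj' s hs (hIT t₀ ht₀ t ht s (le_of_lt h1) (le_of_lt hst))
    have hori' : ∀ s' ∈ deltaSet S.flip, ∀ t' ∈ deltaSet T.flip, s' < t' := by
      intro s' hs' t' ht'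
      have h := hrev (-t') (deltaSet_flip.mp ht') (-s') (deltaSet_flip.mp hs')
      omega
    have hadj' : IsIntervalZ (deltaSet S.flip ∪ deltaSet T.flip) := by
      intro a ha b hb c hac hcb
      have ha' : -a ∈ deltaSet S ∪ deltaSet T := by
        rcases ha with h | h
        exacts [Set.mem_union_left _ (deltaSet_flip.mp h),
          Set.mem_union_right _ (deltaSet_flip.mp h)]
      have hb' : -b ∈ deltaSet S ∪ deltaSet T := by
        rcases hb with h | h
        exacts [Set.mem_union_left _ (deltaSet_flip.mp h),
          Set.mem_union_right _ (deltaSet_flip.mp h)]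
      have hc' := hadj (-b) hb' (-a) ha' (-c) (by omega) (by omega)
      rcases hc' with h | h
      · exact Set.mem_union_left _ (deltaSet_flip.mpr h)
      · exact Set.mem_union_right _ (deltaSet_flip.mpr h)
    obtain ⟨e, he⟩ := oriented_case (G := G.flip) hfg lam hlam X.flip hX.flip_of
      S.flip T.flip hSsub.flip_of hSsimp.flip_of hTsub.flip_of hTsimp.flip_of hadj' hori'
    exact ⟨e.unflip, e.unflip_not_split he⟩
end
end
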